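/- arXiv:1711.08043 — 6 statements merged into one kernel-verified Lean document; each statement's English description precedes it below -/
import Mathlib

section
/- Let E ⊆ ℝ^d and let 𝒢 be a linear operator on polynomials whose action on a polynomial f is 𝒢f(x) = (1/2)tr(a(x)∇²f(x)) + b(x)ᵀ∇f(x) + ∫(f(x+ξ)−f(x)−ξᵀ∇f(x))ν(x,dξ). If b restricted to E is a polynomial of degree ≤ 1, a(x) + ∫ξξᵀν(x,dξ) restricted to E has entries that are polynomials of degree ≤ 2, and for every multi-index α with |α| ≥ 3 the function x ↦ ∫ξ^α ν(x,dξ) restricted to E is a polynomial of degree ≤ |α|, then 𝒢 maps polynomials of degree ≤ n on E to polynomials of degree ≤ n on E, for every n. -/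
open MeasureTheory MvPolynomial Filter Set

noncomputable section

/-- The jump-diffusion operator
`𝒢 f(x) = ½ tr(a(x)∇²f(x)) + b(x)ᵀ∇f(x) + ∫ (f(x+ξ) − f(x) − ξᵀ∇f(x)) ν(x,dξ)`. -/
def jdOp {d : ℕ} (a : (Fin d → ℝ) → Matrix (Fin d) (Fin d) ℝ)
    (b : (Fin d → ℝ) → Fin d → ℝ) (ν : (Fin d → ℝ) → Measure (Fin d → ℝ))
    (f : (Fin d → ℝ) → ℝ) (x : Fin d → ℝ) : ℝ :=
  (1 / 2) * ∑ i, ∑ j, a x i j *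
      fderiv ℝ (fun y => fderiv ℝ f y (Pi.single j 1)) x (Pi.single i 1)
    + ∑ i, b x i * fderiv ℝ f x (Pi.single i 1)
    + ∫ ξ, (f (x + ξ) - f x - ∑ i, ξ i * fderiv ℝ f x (Pi.single i 1)) ∂(ν x)

section Auxiliary

variable {d : ℕ}


def Lmap (p : MvPolynomial (Fin d) ℝ) (x : Fin d → ℝ) : (Fin d → ℝ) →L[ℝ] ℝ :=
  ∑ i, MvPolynomial.eval x (MvPolynomial.pderiv i p) • ContinuousLinearMap.proj i

lemma hasFDerivAt_eval (p : MvPolynomial (Fin d) ℝ) (x : Fin d → ℝ) :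
    HasFDerivAt (fun y => MvPolynomial.eval y p) (Lmap p x) x := by
  induction p using MvPolynomial.induction_on with
  | C r => simpa [Lmap] using hasFDerivAt_const r x
  | add p q hp hq =>
      have : Lmap (p + q) x = Lmap p x + Lmap q x := by
        simp [Lmap, add_smul, Finset.sum_add_distrib]
      simp only [this, map_add]; exact hp.add hq
  | mul_X p i hp =>
      have h1 : HasFDerivAt (fun y : Fin d → ℝ => y i)
          (ContinuousLinearMap.proj (R := ℝ) (φ := fun _ : Fin d => ℝ) i) x :=
        (ContinuousLinearMap.proj (R := ℝ) (φ := fun _ : Fin d => ℝ) i).hasFDerivAt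
      have key : Lmap (p * X i) x
          = MvPolynomial.eval x p • ContinuousLinearMap.proj i + (x i) • Lmap p x := by
        apply ContinuousLinearMap.ext; intro v
        simp [Lmap, pderiv_mul, add_smul, Finset.sum_add_distrib, Finset.smul_sum,
          Pi.single_apply, mul_ite, Finset.mul_sum, Finset.sum_ite_eq', mul_comm, mul_assoc,
          mul_left_comm]
        simp [apply_ite (MvPolynomial.eval x), Finset.sum_ite_eq]
      rw [key]
      simp only [map_mul, eval_X]; exact hp.mul h1

lemma fderiv_eval (p : MvPolynomial (Fin d) ℝ) (x : Fin d → ℝ) (i : Fin d) :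
    fderiv ℝ (fun y => MvPolynomial.eval y p) x (Pi.single i 1)
      = MvPolynomial.eval x (MvPolynomial.pderiv i p) := by
  rw [(hasFDerivAt_eval p x).fderiv]
  simp [Lmap, Pi.single_apply, mul_ite, Finset.sum_ite_eq']

lemma fderiv2_eval (p : MvPolynomial (Fin d) ℝ) (x : Fin d → ℝ) (i j : Fin d) :
    fderiv ℝ (fun y => fderiv ℝ (fun z => MvPolynomial.eval z p) y (Pi.single j 1)) x
        (Pi.single i 1)
      = MvPolynomial.eval x (MvPolynomial.pderiv i (MvPolynomial.pderiv j p)) := by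
  have h : (fun y => fderiv ℝ (fun z => MvPolynomial.eval z p) y (Pi.single j 1))
      = fun y => MvPolynomial.eval y (MvPolynomial.pderiv j p) :=
    funext fun y => fderiv_eval p y j
  rw [h, fderiv_eval]

/-- Taylor shift: view `p(x+ξ)` as a polynomial in `ξ` with polynomial (in `x`) coefficients. -/
def shiftPoly (p : MvPolynomial (Fin d) ℝ) :
    MvPolynomial (Fin d) (MvPolynomial (Fin d) ℝ) :=
  aeval (fun i => X i + C (X i)) p

lemma shiftPoly_C (r : ℝ) : shiftPoly (d := d) (C r) = C (C r) := by
  simp [shiftPoly, algebraMap_eq]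

lemma shiftPoly_add (p q : MvPolynomial (Fin d) ℝ) :
    shiftPoly (p + q) = shiftPoly p + shiftPoly q := by simp [shiftPoly]

lemma shiftPoly_mul_X (p : MvPolynomial (Fin d) ℝ) (i : Fin d) :
    shiftPoly (p * X i) = shiftPoly p * (X i + C (X i)) := by simp [shiftPoly]

lemma shiftPoly_eval (p : MvPolynomial (Fin d) ℝ) (x ξ : Fin d → ℝ) :
    eval₂ (eval x) ξ (shiftPoly p) = eval (x + ξ) p := by
  induction p using MvPolynomial.induction_on with
  | C r => simp [shiftPoly_C]
  | add p q hp hq => simp [shiftPoly_add, eval₂_add, hp, hq]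
  | mul_X p i hp => simp [shiftPoly_mul_X, eval₂_mul, eval₂_add, hp, add_comm]

lemma shift_coeff_zero (p : MvPolynomial (Fin d) ℝ) : coeff 0 (shiftPoly p) = p := by
  induction p using MvPolynomial.induction_on with
  | C r => simp [shiftPoly_C, coeff_C]
  | add p q hp hq => simp [shiftPoly_add, coeff_add, hp, hq]
  | mul_X p i hp =>
      rw [shiftPoly_mul_X, mul_add, coeff_add, coeff_mul_X', mul_comm _ (C (X i)),
        coeff_C_mul, hp]
      simp only [Finsupp.support_zero, Finset.notMem_empty, if_false, zero_add]
      ring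

lemma shift_coeff_single (p : MvPolynomial (Fin d) ℝ) (j : Fin d) :
    coeff (Finsupp.single j 1) (shiftPoly p) = pderiv j p := by
  induction p using MvPolynomial.induction_on with
  | C r => simp [shiftPoly_C, coeff_C, eq_comm, Finsupp.single_eq_zero]
  | add p q hp hq => simp [shiftPoly_add, coeff_add, hp, hq]
  | mul_X p i hp =>
      rw [shiftPoly_mul_X, mul_add, coeff_add, coeff_mul_X', mul_comm _ (C (X i)),
        coeff_C_mul, hp, pderiv_mul]
      by_cases h : i = j
      · subst h
        simp [shift_coeff_zero, mul_comm]
        ring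
      · simp [h, Finsupp.support_single_ne_zero, Ne.symm h, mul_comm]

lemma shiftPoly_def (p : MvPolynomial (Fin d) ℝ) :
    shiftPoly p = aeval (fun i => X i + C (X i)) p := rfl


lemma pair_sub_left (i j : Fin d) :
    (Finsupp.single i 1 + Finsupp.single j 1 : Fin d →₀ ℕ) - Finsupp.single i 1
      = Finsupp.single j 1 := by
  ext t; simp [Finsupp.tsub_apply, Finsupp.single_apply]

lemma pair_sub_right (i j : Fin d) :
    (Finsupp.single i 1 + Finsupp.single j 1 : Fin d →₀ ℕ) - Finsupp.single j 1
      = Finsupp.single i 1 := by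
  ext t; simp [Finsupp.tsub_apply, Finsupp.single_apply]

lemma pair_mem_support (i j k : Fin d) (h : k = i ∨ k = j) :
    k ∈ (Finsupp.single i 1 + Finsupp.single j 1 : Fin d →₀ ℕ).support := by
  rcases h with h | h <;> subst h <;>
    simp [Finsupp.mem_support_iff, Finsupp.single_apply]

lemma pair_not_mem_support (i j k : Fin d) (h1 : k ≠ i) (h2 : k ≠ j) :
    k ∉ (Finsupp.single i 1 + Finsupp.single j 1 : Fin d →₀ ℕ).support := by
  simp [Finsupp.mem_support_iff, Finsupp.single_apply, Ne.symm h1, Ne.symm h2]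

lemma shift_coeff_pair (p : MvPolynomial (Fin d) ℝ) (i j : Fin d) :
    pderiv i (pderiv j p)
      = (if i = j then 2 else 1)
          * coeff (Finsupp.single i 1 + Finsupp.single j 1) (shiftPoly p) := by
  induction p using MvPolynomial.induction_on with
  | C r =>
      have hne : (Finsupp.single i 1 + Finsupp.single j 1 : Fin d →₀ ℕ) ≠ 0 := by
        intro h
        have := DFunLike.congr_fun h i
        simp [Finsupp.single_apply] at this
      simp [shiftPoly_C, coeff_C, Ne.symm hne]
  | add p q hp hq =>
      simp only [shiftPoly_add, coeff_add, map_add, hp, hq]; ring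
  | mul_X p k hp =>
      have e1 : pderiv i (pderiv j (p * X k))
          = pderiv i (pderiv j p) * X k + pderiv j p * pderiv i (X k)
            + pderiv i p * pderiv j (X k)
            + p * pderiv i (pderiv j (X k : MvPolynomial (Fin d) ℝ)) := by
        rw [pderiv_mul, map_add, pderiv_mul, pderiv_mul]; ring
  -- second derivative of X k vanishes
      have e2 : pderiv i (pderiv j (X k : MvPolynomial (Fin d) ℝ)) = 0 := by
        by_cases h : k = j
        · subst h; rw [pderiv_X_self]; exact pderiv_one
        · rw [pderiv_X_of_ne h]; exact map_zero _
      rw [e1, e2, mul_zero, add_zero, shiftPoly_mul_X, mul_add, coeff_add, coeff_mul_X',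
        mul_comm (shiftPoly p) (C (X k)), coeff_C_mul]
      by_cases hki : k = i
      · subst hki
        by_cases hij : k = j
        · subst hij
          rw [if_pos (pair_mem_support k k k (Or.inl rfl)), pair_sub_right,
            shift_coeff_single, pderiv_X_self]
          simp only [eq_self_iff_true, if_true] at hp ⊢
          rw [hp]; ring
        · rw [if_pos (pair_mem_support k j k (Or.inl rfl)), pair_sub_left,
            shift_coeff_single, pderiv_X_self, pderiv_X_of_ne hij]
          simp only [if_neg hij] at hp ⊢
          rw [hp]; ring
      · by_cases hkj : k = j
        · subst hkj
          rw [if_pos (pair_mem_support i k k (Or.inr rfl)), pair_sub_right,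
            shift_coeff_single, pderiv_X_self, pderiv_X_of_ne hki]
          have hij : ¬ i = k := fun h => hki h.symm
          simp only [if_neg hij] at hp ⊢
          rw [hp]; ring
        · rw [if_neg (pair_not_mem_support i j k hki hkj),
            pderiv_X_of_ne hki, pderiv_X_of_ne hkj]
          rw [hp]; ring

/-- Coefficients of `q` at `α` are polynomials of degree at most `n - |α|`. -/
def DegOK (n : ℕ) (q : MvPolynomial (Fin d) (MvPolynomial (Fin d) ℝ)) : Prop :=
  ∀ α : Fin d →₀ ℕ, coeff α q = 0 ∨ (∑ i, α i) + (coeff α q).totalDegree ≤ n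

lemma degOK_mono {n m : ℕ} {q : MvPolynomial (Fin d) (MvPolynomial (Fin d) ℝ)}
    (h : DegOK n q) (hnm : n ≤ m) : DegOK m q := by
  intro α; rcases h α with h' | h'; · exact Or.inl h'
  · exact Or.inr (h'.trans hnm)

lemma degOK_C {n : ℕ} {s : MvPolynomial (Fin d) ℝ} (h : s.totalDegree ≤ n) :
    DegOK n (C s) := by
  intro α
  by_cases h0 : (0 : Fin d →₀ ℕ) = α
  · right
    rw [coeff_C, if_pos h0, ← h0]
    simpa using h
  · left; rw [coeff_C, if_neg h0]

lemma degOK_mul {n m : ℕ} {q₁ q₂ : MvPolynomial (Fin d) (MvPolynomial (Fin d) ℝ)}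
    (h₁ : DegOK n q₁) (h₂ : DegOK m q₂) : DegOK (n + m) (q₁ * q₂) := by
  classical
  intro α
  by_cases hz : coeff α (q₁ * q₂) = 0
  · exact Or.inl hz
  right
  have hterm : ∀ x ∈ Finset.HasAntidiagonal.antidiagonal α,
      (coeff x.1 q₁ * coeff x.2 q₂ = 0) ∨
      ((∑ i, α i) + (coeff x.1 q₁ * coeff x.2 q₂).totalDegree ≤ n + m) := by
    intro x hx
    rcases h₁ x.1 with h | h
    · exact Or.inl (by rw [h, zero_mul])
    rcases h₂ x.2 with h' | h'
    · exact Or.inl (by rw [h', mul_zero])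
    right
    have hsum : (∑ i, α i) = (∑ i, x.1 i) + (∑ i, x.2 i) := by
      rw [Finset.HasAntidiagonal.mem_antidiagonal] at hx
      rw [← hx]; simp [Finsupp.add_apply, Finset.sum_add_distrib]
    have hmul := totalDegree_mul (coeff x.1 q₁) (coeff x.2 q₂)
    omega
  obtain ⟨x₀, hx₀, hne⟩ : ∃ x ∈ Finset.HasAntidiagonal.antidiagonal α, coeff x.1 q₁ * coeff x.2 q₂ ≠ 0 := by
    by_contra h
    push_neg at h
    rw [coeff_mul] at hz
    exact hz (Finset.sum_eq_zero h)
  have hα : (∑ i, α i) ≤ n + m := by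
    rcases hterm x₀ hx₀ with h | h; · exact absurd h hne
    omega
  have htd : (coeff α (q₁ * q₂)).totalDegree ≤ (n + m) - (∑ i, α i) := by
    rw [coeff_mul]
    refine (totalDegree_finset_sum _ _).trans (Finset.sup_le ?_)
    intro x hx
    rcases hterm x hx with h | h
    · simp [h]
    · omega
  omega

lemma degOK_one : DegOK (d := d) 0 1 := by
  have : (1 : MvPolynomial (Fin d) (MvPolynomial (Fin d) ℝ)) = C 1 := by simp
  rw [this]
  exact degOK_C (by simp)

lemma degOK_pow {g : MvPolynomial (Fin d) (MvPolynomial (Fin d) ℝ)} (hg : DegOK 1 g) (k : ℕ) :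
    DegOK k (g ^ k) := by
  induction k with
  | zero => simpa using degOK_one
  | succ k ih =>
      have := degOK_mul ih hg
      rw [pow_succ]
      exact this

lemma degOK_XC (i : Fin d) : DegOK 1 (X i + C (X i)) := by
  classical
  intro α
  by_cases h0 : (0 : Fin d →₀ ℕ) = α
  · right
    rw [coeff_add, coeff_C, if_pos h0, coeff_X', ← h0]
    have : ¬ (Finsupp.single i 1 = (0 : Fin d →₀ ℕ)) := by
      simp [Finsupp.single_eq_zero]
    rw [if_neg this]
    simp [totalDegree_X]
  by_cases h1 : Finsupp.single i 1 = α
  · right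
    rw [coeff_add, coeff_C, if_neg h0, coeff_X', if_pos h1, ← h1]
    simp [Finsupp.single_apply]
  · left
    rw [coeff_add, coeff_C, if_neg h0, coeff_X', if_neg h1]
    simp

lemma degOK_sum {n : ℕ} {ι : Type*} (s : Finset ι)
    (f : ι → MvPolynomial (Fin d) (MvPolynomial (Fin d) ℝ))
    (hf : ∀ i ∈ s, DegOK n (f i)) : DegOK n (∑ i ∈ s, f i) := by
  classical
  intro α
  by_cases hz : coeff α (∑ i ∈ s, f i) = 0
  · exact Or.inl hz
  right
  rw [coeff_sum] at hz
  obtain ⟨i₀, hi₀, hne⟩ : ∃ i ∈ s, coeff α (f i) ≠ 0 := by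
    by_contra h
    push_neg at h
    exact hz (Finset.sum_eq_zero h)
  have hα : (∑ i, α i) ≤ n := by
    rcases hf i₀ hi₀ α with h | h; · exact absurd h hne
    omega
  have htd : (coeff α (∑ i ∈ s, f i)).totalDegree ≤ n - (∑ i, α i) := by
    rw [coeff_sum]
    refine (totalDegree_finset_sum _ _).trans (Finset.sup_le ?_)
    intro i hi
    rcases hf i hi α with h | h
    · simp [h]
    · omega
  omega

lemma degOK_monomial (β : Fin d →₀ ℕ) (c : ℝ) :
    DegOK (∑ i, β i) (shiftPoly (monomial β c)) := by
  classical
  rw [shiftPoly_def, aeval_monomial]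
  have h1 : DegOK 0 (algebraMap ℝ (MvPolynomial (Fin d) (MvPolynomial (Fin d) ℝ)) c) := by
    have : (algebraMap ℝ (MvPolynomial (Fin d) (MvPolynomial (Fin d) ℝ)) c) = C (C c) := by
      simp [algebraMap_eq]
    rw [this]
    exact degOK_C (by simp)
  have h2 : DegOK (∑ i ∈ β.support, β i)
      (β.prod fun i k => (X i + C (X i) : MvPolynomial (Fin d) (MvPolynomial (Fin d) ℝ)) ^ k) := by
    rw [Finsupp.prod]
    induction β.support using Finset.cons_induction with
    | empty => simpa using degOK_one
    | cons a s ha ih =>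
        rw [Finset.prod_cons, Finset.sum_cons]
        exact degOK_mul (degOK_pow (degOK_XC a) (β a)) ih
  have h3 := degOK_mul h1 h2
  rw [zero_add] at h3
  refine degOK_mono h3 ?_
  refine le_of_eq (Finset.sum_subset (Finset.subset_univ _) ?_)
  intro x _ hx
  simpa [Finsupp.mem_support_iff] using hx

lemma shift_degOK (p : MvPolynomial (Fin d) ℝ) : DegOK p.totalDegree (shiftPoly p) := by
  classical
  have hdecomp : shiftPoly p = ∑ β ∈ p.support, shiftPoly (monomial β (coeff β p)) := by
    rw [shiftPoly_def]
    conv_lhs => rw [p.as_sum]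
    rw [map_sum]
    refine Finset.sum_congr rfl fun β _ => ?_
    rw [shiftPoly_def]
  rw [hdecomp]
  refine degOK_sum _ _ fun β hβ => ?_
  refine degOK_mono (degOK_monomial β (coeff β p)) ?_
  have h := le_totalDegree hβ
  have : (∑ i, β i) = β.sum fun _ e => e := by
    rw [Finsupp.sum_fintype]
    intro _; rfl
  omega

lemma shift_support_bound (p : MvPolynomial (Fin d) ℝ) {α : Fin d →₀ ℕ}
    (hα : α ∈ (shiftPoly p).support) :
    (∑ i, α i) + (coeff α (shiftPoly p)).totalDegree ≤ p.totalDegree := by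
  rcases shift_degOK p α with h | h
  · rw [mem_support_iff] at hα; exact absurd h hα
  · exact h

lemma deg_one_classify {α : Fin d →₀ ℕ} (h : (∑ i, α i) = 1) :
    ∃ i, α = Finsupp.single i 1 := by
  classical
  obtain ⟨i, hi⟩ : ∃ i, α i ≠ 0 := by
    by_contra hc
    push_neg at hc
    simp [hc] at h
  have hsplit : α i + ∑ t ∈ Finset.univ.erase i, α t = 1 := by
    rw [Finset.add_sum_erase _ _ (Finset.mem_univ i)]; exact h
  have hi1 : α i = 1 := by omega
  have hrest : ∀ t ∈ Finset.univ.erase i, α t = 0 := by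
    rw [← Finset.sum_eq_zero_iff]; omega
  refine ⟨i, Finsupp.ext fun t => ?_⟩
  by_cases ht : t = i
  · subst ht; simp [hi1, Finsupp.single_apply]
  · have := hrest t (Finset.mem_erase.mpr ⟨ht, Finset.mem_univ t⟩)
    simp [this, Finsupp.single_apply, Ne.symm ht]

lemma deg_two_classify {α : Fin d →₀ ℕ} (h : (∑ i, α i) = 2) :
    ∃ i j, α = Finsupp.single i 1 + Finsupp.single j 1 := by
  classical
  obtain ⟨i, hi⟩ : ∃ i, α i ≠ 0 := by
    by_contra hc
    push_neg at hc
    simp [hc] at h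
  have hsplit : α i + ∑ t ∈ Finset.univ.erase i, α t = 2 := by
    rw [Finset.add_sum_erase _ _ (Finset.mem_univ i)]; exact h
  by_cases h2 : α i = 2
  · have hrest : ∀ t ∈ Finset.univ.erase i, α t = 0 := by
      rw [← Finset.sum_eq_zero_iff]; omega
    refine ⟨i, i, Finsupp.ext fun t => ?_⟩
    simp only [Finsupp.add_apply, Finsupp.single_apply]
    by_cases hti : i = t
    · rw [if_pos hti, ← hti, h2]
    · have := hrest t (Finset.mem_erase.mpr ⟨fun h => hti h.symm, Finset.mem_univ t⟩)
      rw [if_neg hti, this]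
      omega
  · have hi1 : α i = 1 := by omega
    have hrest1 : ∑ t ∈ Finset.univ.erase i, α t = 1 := by omega
    obtain ⟨j, hj, hjne⟩ : ∃ j ∈ Finset.univ.erase i, α j ≠ 0 := by
      by_contra hc
      push_neg at hc
      rw [Finset.sum_eq_zero hc] at hrest1
      omega
    have hsplit2 : α j + ∑ t ∈ (Finset.univ.erase i).erase j, α t = 1 := by
      rw [Finset.add_sum_erase _ _ hj]; exact hrest1
    have hj1 : α j = 1 := by omega
    have hrest2 : ∀ t ∈ (Finset.univ.erase i).erase j, α t = 0 := by
      rw [← Finset.sum_eq_zero_iff]; omega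
    have hij : j ≠ i := (Finset.mem_erase.mp hj).1
    refine ⟨i, j, Finsupp.ext fun t => ?_⟩
    simp only [Finsupp.add_apply, Finsupp.single_apply]
    by_cases hti : i = t <;> by_cases htj : j = t
    · exact absurd (htj.trans hti.symm) hij
    · rw [if_pos hti, if_neg htj, ← hti, hi1]
      omega
    · rw [if_neg hti, if_pos htj, ← htj, hj1]
    · have := hrest2 t (Finset.mem_erase.mpr ⟨fun h => htj h.symm,
        Finset.mem_erase.mpr ⟨fun h => hti h.symm, Finset.mem_univ t⟩⟩)
      rw [if_neg hti, if_neg htj, this]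
      omega

lemma pair_eq_iff {i j k l : Fin d} :
    (Finsupp.single i 1 + Finsupp.single j 1 : Fin d →₀ ℕ)
        = Finsupp.single k 1 + Finsupp.single l 1
      ↔ (i = k ∧ j = l) ∨ (i = l ∧ j = k) := by
  constructor
  · intro h
    by_cases hik : i = k
    · subst hik
      have := add_left_cancel h
      exact Or.inl ⟨rfl, Finsupp.single_left_injective one_ne_zero this⟩
    · have hval := DFunLike.congr_fun h i
      simp only [Finsupp.add_apply, Finsupp.single_apply, if_pos rfl] at hval
      have hli : l = i := by
        by_contra hli
        have hk : ¬ k = i := fun h => hik h.symm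
        rw [if_neg hk, if_neg hli] at hval
        split_ifs at hval
      subst hli
      rw [add_comm (Finsupp.single k 1)] at h
      have := add_left_cancel h
      exact Or.inr ⟨rfl, Finsupp.single_left_injective one_ne_zero this⟩
  · rintro (⟨rfl, rfl⟩ | ⟨rfl, rfl⟩)
    · rfl
    · exact add_comm _ _

lemma deg_pair (i j : Fin d) :
    (∑ t, (Finsupp.single i 1 + Finsupp.single j 1 : Fin d →₀ ℕ) t) = 2 := by
  simp [Finsupp.add_apply, Finsupp.single_apply, Finset.sum_add_distrib]

lemma sum_pairs (G : (Fin d →₀ ℕ) → ℝ) (D : Finset (Fin d →₀ ℕ))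
    (hD : ∀ α ∈ D, (∑ i, α i) = 2)
    (hG : ∀ α, (∑ i, α i) = 2 → α ∉ D → G α = 0) :
    ∑ α ∈ D, G α
      = ∑ i, ∑ j, (if i = j then (1 : ℝ) else 1 / 2)
          * G (Finsupp.single i 1 + Finsupp.single j 1) := by
  classical
  set φ : Fin d × Fin d → (Fin d →₀ ℕ) :=
    fun p => Finsupp.single p.1 1 + Finsupp.single p.2 1 with hφ
  set T2 : Finset (Fin d →₀ ℕ) := Finset.image φ Finset.univ with hT2
  have hmemdeg : ∀ α ∈ T2, (∑ i, α i) = 2 := by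
    intro α hα
    obtain ⟨p, -, rfl⟩ := Finset.mem_image.mp hα
    exact deg_pair p.1 p.2
  have hDT : D ⊆ T2 := by
    intro α hα
    obtain ⟨i, j, rfl⟩ := deg_two_classify (hD α hα)
    exact Finset.mem_image.mpr ⟨(i, j), Finset.mem_univ _, rfl⟩
  have step1 : ∑ α ∈ D, G α = ∑ α ∈ T2, G α :=
    Finset.sum_subset hDT (fun α hT hD' => hG α (hmemdeg α hT) hD')
  have step2 : ∑ i, ∑ j, (if i = j then (1 : ℝ) else 1 / 2)
        * G (Finsupp.single i 1 + Finsupp.single j 1)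
      = ∑ p ∈ Finset.univ ×ˢ (Finset.univ : Finset (Fin d)),
          (if p.1 = p.2 then (1 : ℝ) else 1 / 2) * G (φ p) := by
    rw [Finset.sum_product]
  have step3 : ∑ p ∈ Finset.univ ×ˢ (Finset.univ : Finset (Fin d)),
        (if p.1 = p.2 then (1 : ℝ) else 1 / 2) * G (φ p)
      = ∑ α ∈ T2, ∑ p ∈ (Finset.univ ×ˢ (Finset.univ : Finset (Fin d))).filter
          (fun p => φ p = α), (if p.1 = p.2 then (1 : ℝ) else 1 / 2) * G (φ p) := by
    rw [Finset.sum_fiberwise_of_maps_to]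
    intro p _
    exact Finset.mem_image.mpr ⟨p, Finset.mem_univ _, rfl⟩
  have step4 : ∀ α ∈ T2,
      ∑ p ∈ (Finset.univ ×ˢ (Finset.univ : Finset (Fin d))).filter (fun p => φ p = α),
          (if p.1 = p.2 then (1 : ℝ) else 1 / 2) * G (φ p) = G α := by
    intro α hα
    obtain ⟨⟨i₀, j₀⟩, -, rfl⟩ := Finset.mem_image.mp hα
    by_cases hij : i₀ = j₀
    · subst hij
      have hfib : (Finset.univ ×ˢ (Finset.univ : Finset (Fin d))).filter
          (fun p => φ p = φ (i₀, i₀)) = {(i₀, i₀)} := by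
        ext ⟨a, b⟩
        simp only [Finset.mem_filter, Finset.mem_product, Finset.mem_univ, true_and,
          Finset.mem_singleton, hφ, Prod.mk.injEq]
        constructor
        · intro h
          rcases pair_eq_iff.mp h with ⟨h1, h2⟩ | ⟨h1, h2⟩ <;> exact ⟨h1, h2⟩
        · rintro ⟨rfl, rfl⟩; rfl
      rw [hfib, Finset.sum_singleton, if_pos rfl, one_mul]
    · have hfib : (Finset.univ ×ˢ (Finset.univ : Finset (Fin d))).filter
          (fun p => φ p = φ (i₀, j₀)) = {(i₀, j₀), (j₀, i₀)} := by
        ext ⟨a, b⟩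
        simp only [Finset.mem_filter, Finset.mem_product, Finset.mem_univ, true_and,
          Finset.mem_insert, Finset.mem_singleton, hφ, Prod.mk.injEq]
        constructor
        · intro h
          rcases pair_eq_iff.mp h with ⟨h1, h2⟩ | ⟨h1, h2⟩
          · exact Or.inl ⟨h1, h2⟩
          · exact Or.inr ⟨h1, h2⟩
        · rintro (⟨rfl, rfl⟩ | ⟨rfl, rfl⟩)
          · rfl
          · exact add_comm _ _
      have hne : ((i₀, j₀) : Fin d × Fin d) ≠ (j₀, i₀) := by
        simp [Prod.ext_iff, hij]
      rw [hfib, Finset.sum_insert (by simp [Prod.ext_iff, hij]), Finset.sum_singleton]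
      have hc : φ (j₀, i₀) = φ (i₀, j₀) := add_comm _ _
      rw [hc, if_neg hij, if_neg (Ne.symm hij)]
      ring
  rw [step1, step2, step3]
  exact (Finset.sum_congr rfl step4).symm

lemma deg_single (i : Fin d) : (∑ t, (Finsupp.single i 1 : Fin d →₀ ℕ) t) = 1 := by
  simp [Finsupp.single_apply]

lemma prod_pow_single (ξ : Fin d → ℝ) (i : Fin d) :
    (∏ t, ξ t ^ (Finsupp.single i 1 : Fin d →₀ ℕ) t) = ξ i := by
  rw [Finset.prod_eq_single i]
  · simp
  · intro t _ ht
    simp [Finsupp.single_apply, Ne.symm ht]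
  · simp

lemma prod_pow_pair (ξ : Fin d → ℝ) (i j : Fin d) :
    (∏ t, ξ t ^ ((Finsupp.single i 1 + Finsupp.single j 1 : Fin d →₀ ℕ)) t) = ξ i * ξ j := by
  simp only [Finsupp.add_apply, pow_add, Finset.prod_mul_distrib]
  rw [prod_pow_single, prod_pow_single]

lemma integrable_monomial (μ : Measure (Fin d → ℝ)) (α : Fin d →₀ ℕ)
    (hi : Integrable (fun ξ => ‖ξ‖ ^ (∑ i, α i)) μ) :
    Integrable (fun ξ : Fin d → ℝ => ∏ i, ξ i ^ α i) μ := by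
  refine hi.mono' ?_ ?_
  · exact (continuous_finset_prod _ fun i _ => (continuous_apply i).pow _).aestronglyMeasurable
  · refine ae_of_all _ fun ξ => ?_
    rw [Real.norm_eq_abs, Finset.abs_prod]
    calc (∏ i, |ξ i ^ α i|) ≤ ∏ i, ‖ξ‖ ^ α i := by
          refine Finset.prod_le_prod (fun i _ => abs_nonneg _) fun i _ => ?_
          rw [abs_pow]
          exact pow_le_pow_left₀ (abs_nonneg _) (norm_le_pi_norm ξ i) _
      _ = ‖ξ‖ ^ (∑ i, α i) := Finset.prod_pow_eq_pow_sum _ _ _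

lemma integrand_eq (p : MvPolynomial (Fin d) ℝ) (x ξ : Fin d → ℝ) :
    eval (x + ξ) p - eval x p - ∑ i, ξ i * eval x (pderiv i p)
      = ∑ α ∈ (shiftPoly p).support.filter (fun α => 2 ≤ ∑ i, α i),
          eval x (coeff α (shiftPoly p)) * ∏ i, ξ i ^ α i := by
  classical
  set t : (Fin d →₀ ℕ) → ℝ :=
    fun α => eval x (coeff α (shiftPoly p)) * ∏ i, ξ i ^ α i with ht
  have htotal : eval (x + ξ) p = ∑ α ∈ (shiftPoly p).support, t α := by
    rw [← shiftPoly_eval p x ξ, eval₂_eq']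
  set S := (shiftPoly p).support with hS
  have hsplit1 : ∑ α ∈ S, t α
      = ∑ α ∈ S.filter (fun α => 2 ≤ ∑ i, α i), t α
        + ∑ α ∈ S.filter (fun α => ¬ 2 ≤ ∑ i, α i), t α :=
    (Finset.sum_filter_add_sum_filter_not _ _ _).symm
  have hsplit2 : ∑ α ∈ S.filter (fun α => ¬ 2 ≤ ∑ i, α i), t α
      = ∑ α ∈ (S.filter (fun α => ¬ 2 ≤ ∑ i, α i)).filter (fun α => (∑ i, α i) = 1), t α
        + ∑ α ∈ (S.filter (fun α => ¬ 2 ≤ ∑ i, α i)).filter (fun α => ¬ (∑ i, α i) = 1), t α :=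
    (Finset.sum_filter_add_sum_filter_not _ _ _).symm
  have h1 : ∑ α ∈ (S.filter (fun α => ¬ 2 ≤ ∑ i, α i)).filter (fun α => (∑ i, α i) = 1), t α
      = ∑ i, ξ i * eval x (pderiv i p) := by
    rw [Finset.sum_subset (show (S.filter (fun α => ¬ 2 ≤ ∑ i, α i)).filter
        (fun α => (∑ i, α i) = 1) ⊆ Finset.image (fun i => Finsupp.single i 1) Finset.univ from ?_)
      ?_]
    · rw [Finset.sum_image (fun i _ j _ h => Finsupp.single_left_injective one_ne_zero h)]
      refine Finset.sum_congr rfl fun i _ => ?_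
      rw [ht]
      simp only
      rw [shift_coeff_single, prod_pow_single]
      ring
    · intro α hα
      obtain ⟨i, rfl⟩ := deg_one_classify (Finset.mem_filter.mp hα).2
      exact Finset.mem_image.mpr ⟨i, Finset.mem_univ _, rfl⟩
    · intro β hβ hnβ
      obtain ⟨i, -, rfl⟩ := Finset.mem_image.mp hβ
      have : Finsupp.single i 1 ∉ S := by
        intro hmem
        exact hnβ (Finset.mem_filter.mpr ⟨Finset.mem_filter.mpr ⟨hmem, by
          rw [deg_single]; omega⟩, deg_single i⟩)
      rw [hS, mem_support_iff, not_not] at this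
      rw [ht]
      simp only
      rw [this]
      simp
  have h0 : ∑ α ∈ (S.filter (fun α => ¬ 2 ≤ ∑ i, α i)).filter (fun α => ¬ (∑ i, α i) = 1), t α
      = eval x p := by
    rw [Finset.sum_subset (show (S.filter (fun α => ¬ 2 ≤ ∑ i, α i)).filter
        (fun α => ¬ (∑ i, α i) = 1) ⊆ {0} from ?_) ?_]
    · rw [Finset.sum_singleton, ht]
      simp only
      rw [shift_coeff_zero]
      simp
    · intro α hα
      have h1' := (Finset.mem_filter.mp hα).2
      have h2' := (Finset.mem_filter.mp (Finset.mem_filter.mp hα).1).2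
      have hz : (∑ i, α i) = 0 := by omega
      have : α = 0 := by
        ext i
        have := Finset.sum_eq_zero_iff.mp hz i (Finset.mem_univ i)
        simpa using this
      simp [this]
    · intro β hβ hnβ
      rw [Finset.mem_singleton] at hβ
      subst hβ
      have : (0 : Fin d →₀ ℕ) ∉ S := by
        intro hmem
        exact hnβ (Finset.mem_filter.mpr ⟨Finset.mem_filter.mpr ⟨hmem, by simp⟩, by simp⟩)
      rw [hS, mem_support_iff, not_not] at this
      have hp0 : p = 0 := by rw [← shift_coeff_zero p, this]
      rw [ht]
      simp only
      rw [this]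
      simp
  rw [htotal, hsplit1, hsplit2, h1, h0]
  ring

end Auxiliary

/-- if `b ∈ Pol₁(E)`, `a + ∫ξξᵀν ∈ Pol₂(E)` entrywise, and
`∫ ξ^α ν(·,dξ) ∈ Pol_{|α|}(E)` for all `|α| ≥ 3`, then `𝒢` maps `Pol_n(E)` to itself
for every `n`. -/
theorem stmt0 {d : ℕ} (E : Set (Fin d → ℝ))
    (a : (Fin d → ℝ) → Matrix (Fin d) (Fin d) ℝ)
    (b : (Fin d → ℝ) → Fin d → ℝ)
    (ν : (Fin d → ℝ) → Measure (Fin d → ℝ))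
    (hpsd : ∀ x, (a x).PosSemidef)
    (hν0 : ∀ x, ν x ({0} : Set (Fin d → ℝ)) = 0)
    (hmom : ∀ x ∈ E, ∀ n : ℕ, 2 ≤ n → Integrable (fun ξ => ‖ξ‖ ^ n) (ν x))
    (hb : ∀ i, ∃ q : MvPolynomial (Fin d) ℝ, q.totalDegree ≤ 1 ∧
      ∀ x ∈ E, MvPolynomial.eval x q = b x i)
    (ha : ∀ i j, ∃ q : MvPolynomial (Fin d) ℝ, q.totalDegree ≤ 2 ∧
      ∀ x ∈ E, MvPolynomial.eval x q = a x i j + ∫ ξ, ξ i * ξ j ∂(ν x))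
    (hnu : ∀ α : Fin d → ℕ, 3 ≤ ∑ i, α i →
      ∃ q : MvPolynomial (Fin d) ℝ, q.totalDegree ≤ ∑ i, α i ∧
        ∀ x ∈ E, MvPolynomial.eval x q = ∫ ξ, ∏ i, ξ i ^ α i ∂(ν x)) :
    ∀ n : ℕ, ∀ p : MvPolynomial (Fin d) ℝ, p.totalDegree ≤ n →
      ∃ r : MvPolynomial (Fin d) ℝ, r.totalDegree ≤ n ∧
        ∀ x ∈ E, MvPolynomial.eval x r =
          jdOp a b ν (fun y => MvPolynomial.eval y p) x := by
  
  classical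
  intro n p hdeg
  choose qb hqb1 hqb2 using hb
  choose qa hqa1 hqa2 using ha
  choose qn hqn1 hqn2 using hnu
  set S := (shiftPoly p).support with hS
  set A := S.filter (fun α => 2 ≤ ∑ i, α i) with hA
  set D3 := S.filter (fun α => 3 ≤ ∑ i, α i) with hD3
  have hD3mem : ∀ α ∈ D3, 3 ≤ ∑ i, (α : Fin d →₀ ℕ) i := fun α hα =>
    (Finset.mem_filter.mp hα).2
  refine ⟨C (1 / 2) * (∑ i, ∑ j, qa i j * (pderiv i (pderiv j p)))
      + (∑ i, qb i * pderiv i p)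
      + ∑ α ∈ D3.attach, (coeff α.1 (shiftPoly p)) * qn α.1 (hD3mem α.1 α.2), ?_, ?_⟩
  · -- degree bound
    refine (totalDegree_add _ _).trans
      (max_le ((totalDegree_add _ _).trans (max_le ?_ ?_)) ?_)
    · refine (totalDegree_mul _ _).trans ?_
      rw [totalDegree_C, zero_add]
      refine (totalDegree_finset_sum _ _).trans (Finset.sup_le fun i _ => ?_)
      refine (totalDegree_finset_sum _ _).trans (Finset.sup_le fun j _ => ?_)
      by_cases hc : coeff (Finsupp.single i 1 + Finsupp.single j 1) (shiftPoly p) = 0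
      · rw [shift_coeff_pair p i j, hc, mul_zero, mul_zero]
        simp
      · have hmem : (Finsupp.single i 1 + Finsupp.single j 1) ∈ S :=
          mem_support_iff.mpr hc
        have hb1 := shift_support_bound p (hS ▸ hmem)
        rw [deg_pair] at hb1
        have h2 : (pderiv i (pderiv j p)).totalDegree
            ≤ (coeff (Finsupp.single i 1 + Finsupp.single j 1) (shiftPoly p)).totalDegree := by
          rw [shift_coeff_pair p i j]
          refine (totalDegree_mul _ _).trans ?_
          have he : ((if i = j then 2 else 1) : MvPolynomial (Fin d) ℝ)
              = C (if i = j then 2 else 1) := by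
            split_ifs
            · exact (map_ofNat C 2).symm
            · exact (map_one C).symm
          rw [he, totalDegree_C, zero_add]
        have h3 := totalDegree_mul (qa i j) (pderiv i (pderiv j p))
        have h4 := hqa1 i j
        omega
    · refine (totalDegree_finset_sum _ _).trans (Finset.sup_le fun i _ => ?_)
      by_cases hc : coeff (Finsupp.single i 1) (shiftPoly p) = 0
      · have hz : pderiv i p = 0 := by rw [← shift_coeff_single p i, hc]
        simp [hz]
      · have hmem : Finsupp.single i 1 ∈ S := mem_support_iff.mpr hc
        have hb1 := shift_support_bound p (hS ▸ hmem)
        rw [deg_single] at hb1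
        have h2 : (pderiv i p).totalDegree
            = (coeff (Finsupp.single i 1) (shiftPoly p)).totalDegree := by
          rw [shift_coeff_single]
        have h3 := totalDegree_mul (qb i) (pderiv i p)
        have h4 := hqb1 i
        omega
    · refine (totalDegree_finset_sum _ _).trans (Finset.sup_le fun α _ => ?_)
      have hmem : (α : { x // x ∈ D3 }).1 ∈ S := (Finset.mem_filter.mp α.2).1
      have hb1 := shift_support_bound p (hS ▸ hmem)
      have h2 := totalDegree_mul (coeff α.1 (shiftPoly p)) (qn α.1 (hD3mem α.1 α.2))
      have h4 := hqn1 α.1 (hD3mem α.1 α.2)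
      omega
  · -- evaluation on E
    intro x hx
    simp only [jdOp, fderiv_eval, fderiv2_eval]
    set G : (Fin d →₀ ℕ) → ℝ :=
      fun α => eval x (coeff α (shiftPoly p)) * ∫ ξ, (∏ i, ξ i ^ α i) ∂(ν x) with hG
    have hint : ∫ ξ, (eval (x + ξ) p - eval x p - ∑ i, ξ i * eval x (pderiv i p)) ∂(ν x)
        = ∑ α ∈ A, G α := by
      have hfun : (fun ξ => eval (x + ξ) p - eval x p - ∑ i, ξ i * eval x (pderiv i p))
          = fun ξ => ∑ α ∈ A, eval x (coeff α (shiftPoly p)) * ∏ i, ξ i ^ α i :=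
        funext fun ξ => integrand_eq p x ξ
      rw [hfun, integral_finset_sum]
      · exact Finset.sum_congr rfl fun α _ => integral_const_mul _ _
      · intro α hα
        exact (integrable_monomial (ν x) α
          (hmom x hx _ (Finset.mem_filter.mp hα).2)).const_mul _
    rw [hint]
    have hAsplit : ∑ α ∈ A, G α
        = ∑ α ∈ A.filter (fun α => (∑ i, α i) = 2), G α
          + ∑ α ∈ A.filter (fun α => ¬ (∑ i, α i) = 2), G α :=
      (Finset.sum_filter_add_sum_filter_not _ _ _).symm
    have hA3 : A.filter (fun α => ¬ (∑ i, α i) = 2) = D3 := by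
      rw [hA, Finset.filter_filter, hD3]
      refine Finset.filter_congr fun α _ => ?_
      constructor
      · rintro ⟨h1, h2⟩; omega
      · intro h1; exact ⟨by omega, by omega⟩
    have hA2 : ∑ α ∈ A.filter (fun α => (∑ i, α i) = 2), G α
        = ∑ i, ∑ j, (if i = j then (1 : ℝ) else 1 / 2)
            * G (Finsupp.single i 1 + Finsupp.single j 1) := by
      refine sum_pairs G _ (fun α hα => (Finset.mem_filter.mp hα).2) ?_
      intro α h2 hα
      have hc : coeff α (shiftPoly p) = 0 := by
        by_contra hc
        exact hα (Finset.mem_filter.mpr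
          ⟨Finset.mem_filter.mpr ⟨mem_support_iff.mpr hc, by omega⟩, h2⟩)
      simp [hG, hc]
    rw [hAsplit, hA3, hA2]
    -- now compute the evaluation of r
    have heDD : ∀ i j : Fin d, eval x (pderiv i (pderiv j p))
        = (if i = j then (2 : ℝ) else 1)
            * eval x (coeff (Finsupp.single i 1 + Finsupp.single j 1) (shiftPoly p)) := by
      intro i j
      rw [shift_coeff_pair p i j, eval_mul]
      split_ifs <;> simp
    have hIpair : ∀ i j : Fin d, (∫ ξ, ξ i * ξ j ∂(ν x))
        = ∫ ξ, (∏ t, ξ t ^ ((Finsupp.single i 1 + Finsupp.single j 1 : Fin d →₀ ℕ)) t)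
            ∂(ν x) := by
      intro i j
      congr 1
      funext ξ
      rw [prod_pow_pair]
    have hD3sum : ∑ α ∈ D3.attach,
          eval x (coeff α.1 (shiftPoly p)) * eval x (qn α.1 (hD3mem α.1 α.2))
        = ∑ α ∈ D3, G α := by
      rw [← Finset.sum_attach D3 G]
      refine Finset.sum_congr rfl fun α _ => ?_
      rw [hqn2 α.1 (hD3mem α.1 α.2) x hx, hG]
    simp only [eval_add, eval_mul, eval_C, map_sum]
    rw [hD3sum]
    have hb' : ∀ i, eval x (qb i) = b x i := fun i => hqb2 i x hx
    have ha' : ∀ i j, eval x (qa i j) = a x i j + ∫ ξ, ξ i * ξ j ∂(ν x) :=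
      fun i j => hqa2 i j x hx
    have key : ∀ i j : Fin d,
        eval x (qa i j) * eval x (pderiv i (pderiv j p)) * (1 / 2 : ℝ)
          = (1 / 2 : ℝ) * (a x i j * eval x (pderiv i (pderiv j p)))
            + (if i = j then (1 : ℝ) else 1 / 2)
                * G (Finsupp.single i 1 + Finsupp.single j 1) := by
      intro i j
      rw [ha', hIpair, heDD]
      simp only [hG]
      split_ifs <;> ring
    calc (1 : ℝ) / 2 * ∑ i, ∑ j, eval x (qa i j) * eval x (pderiv i (pderiv j p))
          + ∑ i, eval x (qb i) * eval x (pderiv i p)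
          + ∑ α ∈ D3, G α
        = ∑ i, ∑ j, ((1 / 2 : ℝ) * (a x i j * eval x (pderiv i (pderiv j p)))
            + (if i = j then (1 : ℝ) else 1 / 2)
                * G (Finsupp.single i 1 + Finsupp.single j 1))
          + ∑ i, b x i * eval x (pderiv i p)
          + ∑ α ∈ D3, G α := by
          rw [Finset.mul_sum]
          congr 2
          · refine Finset.sum_congr rfl fun i _ => ?_
            rw [Finset.mul_sum]
            refine Finset.sum_congr rfl fun j _ => ?_
            rw [← key i j]
            ring
          · exact Finset.sum_congr rfl fun i _ => by rw [hb']
      _ = (1 / 2 : ℝ) * ∑ i, ∑ j, a x i j * eval x (pderiv i (pderiv j p))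
          + ∑ i, b x i * eval x (pderiv i p)
          + ((∑ i, ∑ j, (if i = j then (1 : ℝ) else 1 / 2)
                * G (Finsupp.single i 1 + Finsupp.single j 1))
            + ∑ α ∈ D3, G α) := by
          simp only [Finset.sum_add_distrib, Finset.mul_sum]
          ring


end
end

section
/- Let 𝒢 be a jump-diffusion operator that is polynomial on E (maps Pol_n(E) to itself for each n). Then for every multi-index α with |α| ≥ 2, the function x ↦ ∫ ξ^α ν(x,dξ) is locally bounded on E, and x ↦ a(x) and x ↦ b(x) are locally bounded on E. -/
open MeasureTheory MvPolynomial Filter Set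

noncomputable section

section Aux
open MeasureTheory Filter Set

variable {d : ℕ}

theorem hasFDerivAt_pow_proj (i : Fin d) (n : ℕ) (y : Fin d → ℝ) :
    HasFDerivAt (fun z : Fin d → ℝ => z i ^ n)
      (((n : ℝ) * y i ^ (n - 1)) • (ContinuousLinearMap.proj i : (Fin d → ℝ) →L[ℝ] ℝ)) y := by
  have h := (hasDerivAt_pow n (y i)).comp_hasFDerivAt y
    ((ContinuousLinearMap.proj i : (Fin d → ℝ) →L[ℝ] ℝ).hasFDerivAt)
  exact h

theorem fderiv_pow_proj (i : Fin d) (n : ℕ) (y : Fin d → ℝ) (v : Fin d → ℝ) :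
    fderiv ℝ (fun z : Fin d → ℝ => z i ^ n) y v = (n : ℝ) * y i ^ (n - 1) * v i := by
  rw [(hasFDerivAt_pow_proj i n y).fderiv]; simp

theorem fderiv2_pow_proj (i j k : Fin d) (n : ℕ) (x : Fin d → ℝ) :
    fderiv ℝ (fun y => fderiv ℝ (fun z : Fin d → ℝ => z i ^ n) y (Pi.single j 1)) x
        (Pi.single k 1)
      = (n : ℝ) * ((n - 1 : ℕ) : ℝ) * x i ^ (n - 2) * (Pi.single j 1 : Fin d → ℝ) i * (Pi.single k 1 : Fin d → ℝ) i := by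
  have heq : (fun y => fderiv ℝ (fun z : Fin d → ℝ => z i ^ n) y (Pi.single j 1))
      = fun y => ((n : ℝ) * y i ^ (n - 1)) * (Pi.single j 1 : Fin d → ℝ) i := by
    funext y; exact fderiv_pow_proj i n y _
  rw [heq]
  have h : HasFDerivAt (fun y : Fin d → ℝ => ((n : ℝ) * y i ^ (n - 1)) * (Pi.single j 1 : Fin d → ℝ) i)
      (((Pi.single j 1 : Fin d → ℝ) i * ((n : ℝ) * (((n-1:ℕ) : ℝ) * x i ^ (n - 1 - 1)))) •
        (ContinuousLinearMap.proj i : (Fin d → ℝ) →L[ℝ] ℝ)) x := by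
    have h1 := ((hasFDerivAt_pow_proj i (n-1) x).const_mul (n : ℝ)).mul_const
      ((Pi.single j 1 : Fin d → ℝ) i)
    refine h1.congr_fderiv ?_
    ext v
    simp [mul_comm, mul_assoc, mul_left_comm]
  rw [h.fderiv]
  have h2 : n - 1 - 1 = n - 2 := by omega
  simp only [ContinuousLinearMap.smul_apply, ContinuousLinearMap.proj_apply, smul_eq_mul, h2]
  ring

theorem integrable_coord_pow {μ : Measure (Fin d → ℝ)} {m : ℕ}
    (hInt : Integrable (fun ξ : Fin d → ℝ => ‖ξ‖ ^ m) μ) (i : Fin d) :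
    Integrable (fun ξ : Fin d → ℝ => ξ i ^ m) μ := by
  refine hInt.mono' ?_ ?_
  · exact ((continuous_apply i).pow m).aestronglyMeasurable
  · refine Filter.Eventually.of_forall fun ξ => ?_
    have h1 : |ξ i| ≤ ‖ξ‖ := by
      simpa using norm_le_pi_norm ξ i
    calc ‖ξ i ^ m‖ = |ξ i| ^ m := by rw [Real.norm_eq_abs, abs_pow]
    _ ≤ ‖ξ‖ ^ m := pow_le_pow_left₀ (abs_nonneg _) h1 m

theorem jdOp_pow (a : (Fin d → ℝ) → Matrix (Fin d) (Fin d) ℝ)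
    (b : (Fin d → ℝ) → Fin d → ℝ) (ν : (Fin d → ℝ) → Measure (Fin d → ℝ))
    (i : Fin d) (n : ℕ) (hn : 1 ≤ n) (x : Fin d → ℝ)
    (hInt : ∀ m : ℕ, 2 ≤ m → Integrable (fun ξ : Fin d → ℝ => ‖ξ‖ ^ m) (ν x)) :
    jdOp a b ν (fun y => y i ^ n) x
      = (1/2) * (a x i i * ((n : ℝ) * ((n - 1 : ℕ) : ℝ) * x i ^ (n - 2)))
        + b x i * ((n : ℝ) * x i ^ (n - 1))
        + ∑ m ∈ Finset.Ico 2 (n + 1),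
            (n.choose m : ℝ) * x i ^ (n - m) * ∫ ξ, ξ i ^ m ∂(ν x) := by
  classical
  have hd2 : ∀ (k j : Fin d),
      fderiv ℝ (fun y => fderiv ℝ (fun z : Fin d → ℝ => z i ^ n) y (Pi.single j 1)) x
        (Pi.single k 1)
      = (n : ℝ) * ((n - 1 : ℕ) : ℝ) * x i ^ (n - 2) * (Pi.single j 1 : Fin d → ℝ) i *
        (Pi.single k 1 : Fin d → ℝ) i := fun k j => fderiv2_pow_proj i j k n x
  have hsum1 : ∑ k, ∑ j, a x k j *
      fderiv ℝ (fun y => fderiv ℝ (fun z : Fin d → ℝ => z i ^ n) y (Pi.single j 1)) x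
        (Pi.single k 1)
      = a x i i * ((n : ℝ) * ((n - 1 : ℕ) : ℝ) * x i ^ (n - 2)) := by
    simp only [hd2, Pi.single_apply]
    simp [Finset.mul_sum, mul_ite, Finset.sum_ite_eq]
  have hsum2 : ∑ k, b x k * fderiv ℝ (fun z : Fin d → ℝ => z i ^ n) x (Pi.single k 1)
      = b x i * ((n : ℝ) * x i ^ (n - 1)) := by
    simp only [fderiv_pow_proj, Pi.single_apply]
    simp [mul_ite, Finset.sum_ite_eq]
  have hintg : ∀ ξ : Fin d → ℝ,
      ((x + ξ) i ^ n - x i ^ n - ∑ k, ξ k *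
        fderiv ℝ (fun z : Fin d → ℝ => z i ^ n) x (Pi.single k 1))
      = ∑ m ∈ Finset.Ico 2 (n + 1), (n.choose m : ℝ) * x i ^ (n - m) * ξ i ^ m := by
    intro ξ
    have hlin : ∑ k, ξ k * fderiv ℝ (fun z : Fin d → ℝ => z i ^ n) x (Pi.single k 1)
        = ξ i * ((n : ℝ) * x i ^ (n - 1)) := by
      simp only [fderiv_pow_proj, Pi.single_apply]
      simp [mul_ite, Finset.sum_ite_eq]
    rw [hlin]
    have hadd : (x + ξ) i ^ n = ∑ m ∈ Finset.range (n + 1),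
        ξ i ^ m * x i ^ (n - m) * (n.choose m : ℝ) := by
      rw [Pi.add_apply, add_comm (x i) (ξ i)]
      exact add_pow (ξ i) (x i) n
    rw [hadd]
    have hsplit : ∑ m ∈ Finset.range (n + 1), ξ i ^ m * x i ^ (n - m) * (n.choose m : ℝ)
        = (∑ m ∈ Finset.Ico 0 2, ξ i ^ m * x i ^ (n - m) * (n.choose m : ℝ))
          + ∑ m ∈ Finset.Ico 2 (n + 1), ξ i ^ m * x i ^ (n - m) * (n.choose m : ℝ) := by
      rw [Finset.range_eq_Ico, ← Finset.sum_Ico_consecutive _ (by omega : 0 ≤ 2) (by omega)]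
    rw [hsplit]
    have h01 : ∑ m ∈ Finset.Ico 0 2, ξ i ^ m * x i ^ (n - m) * (n.choose m : ℝ)
        = x i ^ n + ξ i * x i ^ (n - 1) * (n : ℝ) := by
      rw [show Finset.Ico 0 2 = {0, 1} by rfl]
      simp [Finset.sum_insert, Nat.choose_one_right]
    rw [h01]
    rw [Finset.sum_congr rfl (fun m _ => by ring :
      ∀ m ∈ Finset.Ico 2 (n + 1), ξ i ^ m * x i ^ (n - m) * (n.choose m : ℝ)
        = (n.choose m : ℝ) * x i ^ (n - m) * ξ i ^ m)]
    ring
  have hint : ∫ ξ, ((x + ξ) i ^ n - x i ^ n - ∑ k, ξ k *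
        fderiv ℝ (fun z : Fin d → ℝ => z i ^ n) x (Pi.single k 1)) ∂(ν x)
      = ∑ m ∈ Finset.Ico 2 (n + 1), (n.choose m : ℝ) * x i ^ (n - m) * ∫ ξ, ξ i ^ m ∂(ν x) := by
    rw [show (fun ξ : Fin d → ℝ => ((x + ξ) i ^ n - x i ^ n - ∑ k, ξ k *
        fderiv ℝ (fun z : Fin d → ℝ => z i ^ n) x (Pi.single k 1)))
      = fun ξ => ∑ m ∈ Finset.Ico 2 (n + 1), (n.choose m : ℝ) * x i ^ (n - m) * ξ i ^ m
      from funext hintg]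
    rw [integral_finset_sum]
    · exact Finset.sum_congr rfl fun m _ => by
        rw [integral_const_mul]
    · intro m hm
      have h2m : 2 ≤ m := (Finset.mem_Ico.mp hm).1
      exact ((integrable_coord_pow (hInt m h2m) i).const_mul _)
  unfold jdOp
  rw [hsum1, hsum2, hint]


open MeasureTheory MvPolynomial Filter Set


variable {d : ℕ} (E : Set (Fin d → ℝ))

/-- locally bounded (relative to `E`) at `x`. -/
def LocBdd (g : (Fin d → ℝ) → ℝ) (x : Fin d → ℝ) : Prop :=
  ∃ U ∈ nhds x, ∃ C : ℝ, ∀ y ∈ U ∩ E, |g y| ≤ C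

namespace LocBdd
variable {E} {g h : (Fin d → ℝ) → ℝ} {x : Fin d → ℝ}

theorem of_continuous (hg : Continuous g) : LocBdd E g x := by
  refine ⟨{y | |g y| < |g x| + 1}, ?_, |g x| + 1, fun y hy => hy.1.le⟩
  exact (isOpen_lt (hg.abs) continuous_const).mem_nhds (by simp)

theorem of_abs_le (hle : ∀ y ∈ E, |g y| ≤ h y) (hh : LocBdd E h x) : LocBdd E g x := by
  obtain ⟨U, hU, C, hC⟩ := hh
  exact ⟨U, hU, C, fun y hy => (hle y hy.2).trans ((le_abs_self _).trans (hC y hy))⟩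

theorem congr (heq : ∀ y ∈ E, g y = h y) (hh : LocBdd E h x) : LocBdd E g x := by
  obtain ⟨U, hU, C, hC⟩ := hh
  exact ⟨U, hU, C, fun y hy => heq y hy.2 ▸ hC y hy⟩

theorem add (hg : LocBdd E g x) (hh : LocBdd E h x) : LocBdd E (fun y => g y + h y) x := by
  obtain ⟨U, hU, C, hC⟩ := hg; obtain ⟨V, hV, D, hD⟩ := hh
  refine ⟨U ∩ V, inter_mem hU hV, C + D, fun y hy => ?_⟩
  exact (abs_add_le _ _).trans (add_le_add (hC y ⟨hy.1.1, hy.2⟩) (hD y ⟨hy.1.2, hy.2⟩))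

theorem mul (hg : LocBdd E g x) (hh : LocBdd E h x) : LocBdd E (fun y => g y * h y) x := by
  obtain ⟨U, hU, C, hC⟩ := hg; obtain ⟨V, hV, D, hD⟩ := hh
  refine ⟨U ∩ V, inter_mem hU hV, max C 0 * max D 0, fun y hy => ?_⟩
  rw [abs_mul]
  exact mul_le_mul ((hC y ⟨hy.1.1, hy.2⟩).trans (le_max_left _ _))
    ((hD y ⟨hy.1.2, hy.2⟩).trans (le_max_left _ _)) (abs_nonneg _) (le_max_right _ _)

theorem neg (hg : LocBdd E g x) : LocBdd E (fun y => -g y) x := by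
  obtain ⟨U, hU, C, hC⟩ := hg
  exact ⟨U, hU, C, fun y hy => (abs_neg _).le.trans (hC y hy)⟩

theorem sub (hg : LocBdd E g x) (hh : LocBdd E h x) : LocBdd E (fun y => g y - h y) x := by
  simpa [sub_eq_add_neg] using hg.add hh.neg

theorem congr' (heq : ∀ y, h y = g y) (hh : LocBdd E h x) : LocBdd E g x := by
  obtain ⟨U, hU, C, hC⟩ := hh
  exact ⟨U, hU, C, fun y hy => (heq y) ▸ hC y hy⟩

theorem sum {ι : Type*} (s : Finset ι) (f : ι → (Fin d → ℝ) → ℝ)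
    (hf : ∀ i ∈ s, LocBdd E (f i) x) : LocBdd E (fun y => ∑ i ∈ s, f i y) x := by
  classical
  induction s using Finset.induction_on with
  | empty => simpa using of_continuous (continuous_const (y := (0:ℝ)))
  | @insert a s hns ih =>
      have h2 := (hf a (Finset.mem_insert_self a s)).add
        (ih fun i hi => hf i (Finset.mem_insert_of_mem hi))
      exact h2.congr' (fun y => (Finset.sum_insert hns).symm)

end LocBdd


theorem psd_diag_nonneg {M : Matrix (Fin d) (Fin d) ℝ} (hM : M.PosSemidef) (i : Fin d) :
    0 ≤ M i i := by
  have h := hM.dotProduct_mulVec_nonneg (Pi.single i 1)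
  simpa [dotProduct_single, Matrix.mulVec_single] using h

theorem psd_quad {M : Matrix (Fin d) (Fin d) ℝ} (hM : M.PosSemidef) (i j : Fin d) (c : ℝ) :
    0 ≤ M i i + c * M i j + c * M j i + c * c * M j j := by
  have key : M i i + c * M i j + c * M j i + c * c * M j j = M i i + c * M j i + (c * M i j + c * (c * M j j)) := by ring
  rw [key]
  have h := hM.dotProduct_mulVec_nonneg (Pi.single i 1 + Pi.single j c)
  simp only [Matrix.mulVec_add, dotProduct_add, add_dotProduct,
    Matrix.mulVec_single, star_trivial] at h
  simpa [dotProduct_single, single_dotProduct, dotProduct, Pi.single_apply, mul_ite, Finset.sum_ite_eq, Finset.sum_ite_eq',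
    Finset.mul_sum, mul_comm, mul_assoc, mul_left_comm] using h

theorem psd_abs_entry {M : Matrix (Fin d) (Fin d) ℝ} (hM : M.PosSemidef) (i j : Fin d) :
    |M i j| ≤ M i i + M j j := by
  have hsym : M j i = M i j := by
    simpa using hM.isHermitian.apply i j
  rcases abs_cases (M i j) with ⟨h1, _⟩ | ⟨h1, _⟩ <;> rw [h1]
  · have := psd_quad hM i j (-1)
    rw [hsym] at this
    nlinarith [psd_diag_nonneg hM i, psd_diag_nonneg hM j]
  · have := psd_quad hM i j 1
    rw [hsym] at this
    nlinarith [psd_diag_nonneg hM i, psd_diag_nonneg hM j]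


theorem abs_pow_le_even (t : ℝ) (n : ℕ) (hn : 2 ≤ n) :
    |t| ^ n ≤ t ^ (2 * ((n + 1) / 2)) + t ^ (2 * (n / 2)) := by
  have he1 : Even (2 * ((n + 1) / 2)) := even_two_mul _
  have he2 : Even (2 * (n / 2)) := even_two_mul _
  rcases le_total |t| 1 with h | h
  · calc |t| ^ n ≤ |t| ^ (2 * (n / 2)) :=
        pow_le_pow_of_le_one (abs_nonneg t) h (by omega)
      _ = t ^ (2 * (n / 2)) := he2.pow_abs t
      _ ≤ _ := le_add_of_nonneg_left (he1.pow_nonneg t)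
  · calc |t| ^ n ≤ |t| ^ (2 * ((n + 1) / 2)) := pow_le_pow_right₀ h (by omega)
      _ = t ^ (2 * ((n + 1) / 2)) := he1.pow_abs t
      _ ≤ _ := le_add_of_nonneg_right (he2.pow_nonneg t)

theorem prod_pow_abs_le (ξ : Fin d → ℝ) (α : Fin d → ℕ) (hn : 2 ≤ ∑ i, α i) :
    |∏ i, ξ i ^ α i| ≤
      ∑ i, (ξ i ^ (2 * (((∑ j, α j) + 1) / 2)) + ξ i ^ (2 * ((∑ j, α j) / 2))) := by
  have hne : (Finset.univ : Finset (Fin d)).Nonempty := by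
    rcases (Finset.univ (α := Fin d)).eq_empty_or_nonempty with h | h
    · rw [h] at hn; simp at hn
    · exact h
  obtain ⟨i0, _, hi0⟩ := Finset.exists_max_image Finset.univ (fun i => |ξ i|) hne
  calc |∏ i, ξ i ^ α i| = ∏ i, |ξ i| ^ α i := by
        rw [Finset.abs_prod]; exact Finset.prod_congr rfl fun i _ => abs_pow _ _
    _ ≤ ∏ i, |ξ i0| ^ α i := Finset.prod_le_prod
        (fun i _ => pow_nonneg (abs_nonneg _) _)
        (fun i _ => pow_le_pow_left₀ (abs_nonneg _) (hi0 i (Finset.mem_univ i)) _)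
    _ = |ξ i0| ^ (∑ j, α j) := Finset.prod_pow_eq_pow_sum _ _ _
    _ ≤ ξ i0 ^ (2 * (((∑ j, α j) + 1) / 2)) + ξ i0 ^ (2 * ((∑ j, α j) / 2)) :=
        abs_pow_le_even _ _ hn
    _ ≤ _ := Finset.single_le_sum
        (f := fun i => ξ i ^ (2 * (((∑ j, α j) + 1) / 2)) + ξ i ^ (2 * ((∑ j, α j) / 2)))
        (fun i _ => add_nonneg ((even_two_mul _).pow_nonneg _) ((even_two_mul _).pow_nonneg _))
        (Finset.mem_univ i0)

theorem LocBdd.abs {d : ℕ} {E : Set (Fin d → ℝ)} {g : (Fin d → ℝ) → ℝ} {x : Fin d → ℝ}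
    (hg : LocBdd E g x) : LocBdd E (fun y => |g y|) x := by
  obtain ⟨U, hU, C, hC⟩ := hg
  exact ⟨U, hU, C, fun y hy => (abs_abs _).le.trans (hC y hy)⟩


end Aux

/-- if the jump-diffusion operator `𝒢` is polynomial on `E`
(well-defined on `Pol(E)` and maps `Pol_n(E)` to itself), then `a`, `b`, and all
jump moments `x ↦ ∫ ξ^α ν(x,dξ)` with `|α| ≥ 2` are locally bounded on `E`. -/
theorem stmt1 {d : ℕ} (E : Set (Fin d → ℝ))
    (a : (Fin d → ℝ) → Matrix (Fin d) (Fin d) ℝ)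
    (b : (Fin d → ℝ) → Fin d → ℝ)
    (ν : (Fin d → ℝ) → Measure (Fin d → ℝ))
    (hpsd : ∀ x, (a x).PosSemidef)
    (hν0 : ∀ x, ν x ({0} : Set (Fin d → ℝ)) = 0)
    (hmom : ∀ x ∈ E, ∀ n : ℕ, 2 ≤ n → Integrable (fun ξ => ‖ξ‖ ^ n) (ν x))
    (hvanish : ∀ p : MvPolynomial (Fin d) ℝ, (∀ x ∈ E, MvPolynomial.eval x p = 0) →
      ∀ x ∈ E, jdOp a b ν (fun y => MvPolynomial.eval y p) x = 0)
    (hmap : ∀ n : ℕ, ∀ p : MvPolynomial (Fin d) ℝ, p.totalDegree ≤ n →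
      ∃ r : MvPolynomial (Fin d) ℝ, r.totalDegree ≤ n ∧
        ∀ x ∈ E, MvPolynomial.eval x r =
          jdOp a b ν (fun y => MvPolynomial.eval y p) x) :
    (∀ x ∈ E, ∃ U ∈ nhds x, ∃ C : ℝ, ∀ y ∈ U ∩ E,
        (∀ i j, |a y i j| ≤ C) ∧ (∀ i, |b y i| ≤ C)) ∧
    (∀ α : Fin d → ℕ, 2 ≤ ∑ i, α i → ∀ x ∈ E, ∃ U ∈ nhds x, ∃ C : ℝ,
        ∀ y ∈ U ∩ E, |∫ ξ, ∏ i, ξ i ^ α i ∂(ν y)| ≤ C) := by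
  classical
  -- the key polynomial identity from `hmap` applied to `X i ^ n`
  have key : ∀ (i : Fin d) (n : ℕ), 1 ≤ n → ∃ r : MvPolynomial (Fin d) ℝ, ∀ y ∈ E,
      MvPolynomial.eval y r
        = (1/2) * (a y i i * ((n : ℝ) * ((n - 1 : ℕ) : ℝ) * y i ^ (n - 2)))
          + b y i * ((n : ℝ) * y i ^ (n - 1))
          + ∑ m ∈ Finset.Ico 2 (n + 1),
              (n.choose m : ℝ) * y i ^ (n - m) * ∫ ξ, ξ i ^ m ∂(ν y) := by
    intro i n hn
    obtain ⟨r, _, hr⟩ := hmap n (X i ^ n) (by simp [totalDegree_X_pow])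
    refine ⟨r, fun y hy => ?_⟩
    rw [hr y hy,
      show (fun z => MvPolynomial.eval z (X i ^ n : MvPolynomial (Fin d) ℝ))
        = fun z : Fin d → ℝ => z i ^ n from funext fun z => by simp,
      jdOp_pow a b ν i n hn y (fun m hm => hmom y hy m hm)]
  -- `b` is locally bounded on `E`
  have hbLB : ∀ (i : Fin d) (x : Fin d → ℝ), x ∈ E → LocBdd E (fun y => b y i) x := by
    intro i x hx
    obtain ⟨r, hr⟩ := key i 1 le_rfl
    refine LocBdd.congr (fun y hy => ?_) (LocBdd.of_continuous (continuous_eval (p := r)))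
    rw [hr y hy]
    norm_num [Finset.Ico_self]
  -- degree two: diagonal of `a` and second moments
  have haLB : ∀ (i : Fin d) (x : Fin d → ℝ), x ∈ E →
      LocBdd E (fun y => a y i i) x ∧ LocBdd E (fun y => ∫ ξ, ξ i ^ 2 ∂(ν y)) x := by
    intro i x hx
    obtain ⟨r, hr⟩ := key i 2 (by norm_num)
    have hg : LocBdd E (fun y => MvPolynomial.eval y r - b y i * (2 * y i)) x :=
      (LocBdd.of_continuous (continuous_eval (p := r))).sub
        ((hbLB i x hx).mul (LocBdd.of_continuous
          (continuous_const.mul (continuous_apply i))))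
    have hEq : ∀ y ∈ E, a y i i + (∫ ξ, ξ i ^ 2 ∂(ν y))
        = MvPolynomial.eval y r - b y i * (2 * y i) := by
      intro y hy
      rw [hr y hy, show Finset.Ico 2 3 = {2} from rfl]
      norm_num
      ring
    have hs2nn : ∀ y : Fin d → ℝ, 0 ≤ ∫ ξ, ξ i ^ 2 ∂(ν y) :=
      fun y => integral_nonneg fun ξ => sq_nonneg _
    constructor
    · refine LocBdd.of_abs_le (fun y hy => ?_) hg.abs
      rw [abs_of_nonneg (psd_diag_nonneg (hpsd y) i)]
      calc a y i i ≤ a y i i + ∫ ξ, ξ i ^ 2 ∂(ν y) := le_add_of_nonneg_right (hs2nn y)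
        _ = MvPolynomial.eval y r - b y i * (2 * y i) := hEq y hy
        _ ≤ |MvPolynomial.eval y r - b y i * (2 * y i)| := le_abs_self _
    · refine LocBdd.of_abs_le (fun y hy => ?_) hg.abs
      rw [abs_of_nonneg (hs2nn y)]
      calc (∫ ξ, ξ i ^ 2 ∂(ν y)) ≤ a y i i + ∫ ξ, ξ i ^ 2 ∂(ν y) :=
            le_add_of_nonneg_left (psd_diag_nonneg (hpsd y) i)
        _ = MvPolynomial.eval y r - b y i * (2 * y i) := hEq y hy
        _ ≤ |MvPolynomial.eval y r - b y i * (2 * y i)| := le_abs_self _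
  -- all single-coordinate moments of order `≥ 2` are locally bounded
  have hsLB : ∀ (n : ℕ), 2 ≤ n → ∀ (i : Fin d) (x : Fin d → ℝ), x ∈ E →
      LocBdd E (fun y => ∫ ξ, ξ i ^ n ∂(ν y)) x := by
    intro n
    induction n using Nat.strong_induction_on with
    | _ n IH =>
      intro hn i x hx
      rcases eq_or_lt_of_le hn with h2 | h3
      · exact h2 ▸ (haLB i x hx).2
      · obtain ⟨r, hr⟩ := key i n (by omega)
        have hEq : ∀ y ∈ E, (∫ ξ, ξ i ^ n ∂(ν y))
            = MvPolynomial.eval y r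
              - (1/2) * (a y i i * ((n : ℝ) * ((n - 1 : ℕ) : ℝ) * y i ^ (n - 2)))
              - b y i * ((n : ℝ) * y i ^ (n - 1))
              - ∑ m ∈ Finset.Ico 2 n,
                  (n.choose m : ℝ) * y i ^ (n - m) * ∫ ξ, ξ i ^ m ∂(ν y) := by
          intro y hy
          have hsplit : ∑ m ∈ Finset.Ico 2 (n + 1),
                (n.choose m : ℝ) * y i ^ (n - m) * ∫ ξ, ξ i ^ m ∂(ν y)
              = (∑ m ∈ Finset.Ico 2 n,
                  (n.choose m : ℝ) * y i ^ (n - m) * ∫ ξ, ξ i ^ m ∂(ν y))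
                + (n.choose n : ℝ) * y i ^ (n - n) * ∫ ξ, ξ i ^ n ∂(ν y) :=
            Finset.sum_Ico_succ_top (by omega) _
          rw [hr y hy, hsplit]
          simp only [Nat.choose_self, Nat.cast_one, Nat.sub_self, pow_zero, one_mul]
          ring
        refine LocBdd.congr hEq ?_
        refine (((LocBdd.of_continuous (continuous_eval (p := r))).sub ?_).sub ?_).sub ?_
        · exact (LocBdd.of_continuous continuous_const).mul
            ((haLB i x hx).1.mul (LocBdd.of_continuous
              (continuous_const.mul ((continuous_apply i).pow _))))
        · exact (hbLB i x hx).mul (LocBdd.of_continuous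
            (continuous_const.mul ((continuous_apply i).pow _)))
        · refine LocBdd.sum _ _ fun m hm => ?_
          have hm' := Finset.mem_Ico.mp hm
          exact (LocBdd.of_continuous
              (continuous_const.mul ((continuous_apply i).pow _))).mul
            (IH m hm'.2 hm'.1 i x hx)
  -- entries of `a` are locally bounded
  have haijLB : ∀ (i j : Fin d) (x : Fin d → ℝ), x ∈ E →
      LocBdd E (fun y => a y i j) x := by
    intro i j x hx
    refine LocBdd.of_abs_le (fun y hy => ?_)
      (((haLB i x hx).1.abs).add ((haLB j x hx).1.abs))
    calc |a y i j| ≤ a y i i + a y j j := psd_abs_entry (hpsd y) i j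
      _ ≤ |a y i i| + |a y j j| := add_le_add (le_abs_self _) (le_abs_self _)
  constructor
  · -- part 1
    intro x hx
    have hF : LocBdd E
        (fun y => (∑ i, ∑ j, |a y i j|) + ∑ i, |b y i|) x := by
      refine LocBdd.add ?_ ?_
      · exact LocBdd.sum _ _ fun i _ => LocBdd.sum _ _ fun j _ => (haijLB i j x hx).abs
      · exact LocBdd.sum _ _ fun i _ => (hbLB i x hx).abs
    obtain ⟨U, hU, C, hC⟩ := hF
    refine ⟨U, hU, C, fun y hy => ⟨fun i j => ?_, fun i => ?_⟩⟩
    · calc |a y i j| ≤ ∑ j', |a y i j'| :=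
            Finset.single_le_sum (f := fun j' => |a y i j'|)
              (fun _ _ => abs_nonneg _) (Finset.mem_univ j)
        _ ≤ ∑ i', ∑ j', |a y i' j'| :=
            Finset.single_le_sum (f := fun i' => ∑ j', |a y i' j'|)
              (fun _ _ => Finset.sum_nonneg fun _ _ => abs_nonneg _) (Finset.mem_univ i)
        _ ≤ (∑ i', ∑ j', |a y i' j'|) + ∑ i', |b y i'| :=
            le_add_of_nonneg_right (Finset.sum_nonneg fun _ _ => abs_nonneg _)
        _ ≤ C := le_trans (le_abs_self _) (hC y hy)
    · calc |b y i| ≤ ∑ i', |b y i'| :=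
            Finset.single_le_sum (f := fun i' => |b y i'|)
              (fun _ _ => abs_nonneg _) (Finset.mem_univ i)
        _ ≤ (∑ i', ∑ j', |a y i' j'|) + ∑ i', |b y i'| :=
            le_add_of_nonneg_left
              (Finset.sum_nonneg fun _ _ => Finset.sum_nonneg fun _ _ => abs_nonneg _)
        _ ≤ C := le_trans (le_abs_self _) (hC y hy)
  · -- part 2
    intro α hα x hx
    set n : ℕ := ∑ i, α i with hn
    have he1 : 2 ≤ 2 * ((n + 1) / 2) := by omega
    have he2 : 2 ≤ 2 * (n / 2) := by omega
    have hH : LocBdd E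
        (fun y => ∑ i, (|∫ ξ, ξ i ^ (2 * ((n + 1) / 2)) ∂(ν y)|
          + |∫ ξ, ξ i ^ (2 * (n / 2)) ∂(ν y)|)) x := by
      refine LocBdd.sum _ _ fun i _ => LocBdd.add ?_ ?_
      · exact (hsLB _ he1 i x hx).abs
      · exact (hsLB _ he2 i x hx).abs
    obtain ⟨U, hU, C, hC⟩ := hH
    refine ⟨U, hU, C, fun y hy => ?_⟩
    have hyE : y ∈ E := hy.2
    have hint1 : Integrable
        (fun ξ : Fin d → ℝ => ∑ i, (ξ i ^ (2 * ((n + 1) / 2)) + ξ i ^ (2 * (n / 2))))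
        (ν y) := by
      refine integrable_finset_sum _ fun i _ => Integrable.add ?_ ?_
      · exact integrable_coord_pow (hmom y hyE _ he1) i
      · exact integrable_coord_pow (hmom y hyE _ he2) i
    calc |∫ ξ, ∏ i, ξ i ^ α i ∂(ν y)|
        ≤ ∫ ξ, |∏ i, ξ i ^ α i| ∂(ν y) := by
          simpa only [Real.norm_eq_abs] using
            norm_integral_le_integral_norm (fun ξ : Fin d → ℝ => ∏ i, ξ i ^ α i) (μ := ν y)
      _ ≤ ∫ ξ, (∑ i, (ξ i ^ (2 * ((n + 1) / 2)) + ξ i ^ (2 * (n / 2)))) ∂(ν y) := by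
          refine integral_mono_of_nonneg (Eventually.of_forall fun ξ => abs_nonneg _)
            hint1 (Eventually.of_forall fun ξ => ?_)
          simpa [hn] using prod_pow_abs_le ξ α hα
      _ = ∑ i, ∫ ξ, (ξ i ^ (2 * ((n + 1) / 2)) + ξ i ^ (2 * (n / 2))) ∂(ν y) :=
          integral_finset_sum _ fun i _ => Integrable.add
            (integrable_coord_pow (hmom y hyE _ he1) i)
            (integrable_coord_pow (hmom y hyE _ he2) i)
      _ = ∑ i, ((∫ ξ, ξ i ^ (2 * ((n + 1) / 2)) ∂(ν y))
            + ∫ ξ, ξ i ^ (2 * (n / 2)) ∂(ν y)) :=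
          Finset.sum_congr rfl fun i _ => integral_add
            (integrable_coord_pow (hmom y hyE _ he1) i)
            (integrable_coord_pow (hmom y hyE _ he2) i)
      _ ≤ ∑ i, (|∫ ξ, ξ i ^ (2 * ((n + 1) / 2)) ∂(ν y)|
            + |∫ ξ, ξ i ^ (2 * (n / 2)) ∂(ν y)|) :=
          Finset.sum_le_sum fun i _ => add_le_add (le_abs_self _) (le_abs_self _)
      _ ≤ C := le_trans (le_abs_self _) (hC y hy)


end
end

section
/- Consider the ODE system φ′(τ) = 0, ψ′(τ) = λ(e^{−ψ(τ)} − 1) with λ > 0 and complex initial condition ψ(0) = iπ. This system admits no global (complex-valued, continuously differentiable) solution on [0,∞). More precisely, if ψ solves the ODE on [0,T*] then Ψ(τ) = e^{ψ(τ)} solves Ψ′ = −λΨ + λ with Ψ(0) = −1, so Ψ(τ) = 1 − 2e^{−λτ}, which vanishes at τ = λ⁻¹ log 2; hence no solution ψ can exist past (or at) time λ⁻¹ log 2. -/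
open Set

noncomputable section

/-- the generalized Riccati equation `ψ′ = λ(e^{−ψ} − 1)` with complex
initial condition `ψ(0) = iπ` admits no solution existing up to (and including) the
time `λ⁻¹ log 2`; in particular no global solution on `[0,∞)` exists. -/
theorem stmt5 (lam : ℝ) (hlam : 0 < lam) :
    ¬ ∃ ψ : ℝ → ℂ, ψ 0 = Real.pi * Complex.I ∧
      ∀ τ ∈ Set.Icc (0 : ℝ) (lam⁻¹ * Real.log 2),
        HasDerivAt ψ ((lam : ℂ) * (Complex.exp (-ψ τ) - 1)) τ := by
  rintro ⟨ψ, h0, hderiv⟩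
  set T := lam⁻¹ * Real.log 2 with hTdef
  have hT : 0 < T := mul_pos (inv_pos.2 hlam) (Real.log_pos (by norm_num))
  -- vector field
  set v : ℝ → ℂ → ℂ := fun _ z => (lam : ℂ) * (1 - z) with hv
  have hlip : ∀ t : ℝ, LipschitzWith lam.toNNReal (v t) := by
    intro t
    apply LipschitzWith.of_dist_le_mul
    intro z w
    simp only [hv, dist_eq_norm]
    have : (lam : ℂ) * (1 - z) - (lam : ℂ) * (1 - w) = (lam : ℂ) * (w - z) := by ring
    rw [this, norm_mul, Complex.norm_real, Real.norm_eq_abs, abs_of_pos hlam,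
      Real.coe_toNNReal _ hlam.le, norm_sub_rev]
  -- Ψ = exp ∘ ψ
  set Ψ : ℝ → ℂ := fun τ => Complex.exp (ψ τ) with hΨ
  have hΨ' : ∀ t ∈ Icc (0 : ℝ) T, HasDerivAt Ψ (v t (Ψ t)) t := by
    intro t ht
    have h1 := (hderiv t ht).cexp
    have : Complex.exp (ψ t) * ((lam : ℂ) * (Complex.exp (-ψ t) - 1)) = v t (Ψ t) := by
      simp only [hv, hΨ]
      rw [mul_comm (Complex.exp (ψ t)), mul_assoc, sub_mul, ← Complex.exp_add]
      simp [mul_sub]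
    rwa [this] at h1
  -- explicit solution
  set g : ℝ → ℂ := fun τ => 1 - 2 * Complex.exp (-(lam * τ)) with hg
  have hg' : ∀ t : ℝ, HasDerivAt g (v t (g t)) t := by
    intro t
    have h1 : HasDerivAt (fun τ : ℝ => -(lam * τ) : ℝ → ℂ) (-(lam : ℂ)) t := by
      have : HasDerivAt (fun τ : ℝ => ((lam : ℂ) * (τ : ℂ))) (lam : ℂ) t := by
        simpa using (Complex.ofRealCLM.hasDerivAt (x := t)).const_mul (lam : ℂ)
      exact this.neg
    have h2 := ((h1.cexp).const_mul (2 : ℂ)).const_sub 1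
    convert h2 using 1
    · rfl
    simp only [hv, hg]
    ring
  have heq := ODE_solution_unique hlip
    (fun t ht => (hΨ' t ht).continuousAt.continuousWithinAt)
    (fun t ht => (hΨ' t (Ico_subset_Icc_self ht)).hasDerivWithinAt)
    (fun t _ => (hg' t).continuousAt.continuousWithinAt)
    (fun t _ => (hg' t).hasDerivWithinAt)
    (by
      simp only [hΨ, hg, h0]
      rw [Complex.exp_pi_mul_I]
      norm_num)
  have hmem : T ∈ Icc (0 : ℝ) T := ⟨hT.le, le_rfl⟩
  have hgT : g T = 0 := by
    have hlT : lam * T = Real.log 2 := by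
      rw [hTdef, ← mul_assoc, mul_inv_cancel₀ hlam.ne', one_mul]
    have hc : ((lam : ℂ) * (T : ℂ)) = ((Real.log 2 : ℝ) : ℂ) := by
      rw [← Complex.ofReal_mul, hlT]
    simp only [hg, hc]
    rw [show (-((Real.log 2 : ℝ) : ℂ)) = ((-Real.log 2 : ℝ) : ℂ) by push_cast; ring,
      ← Complex.ofReal_exp, Real.exp_neg, Real.exp_log (by norm_num : (0:ℝ) < 2)]
    norm_num
  have : Ψ T = 0 := by rw [heq hmem, hgT]
  exact Complex.exp_ne_zero (ψ T) this

end
end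

section
/- For the process X_t on E = {0,1} that jumps from 1 to 0 with intensity λ > 0 and is absorbed at 0, started at X₀ = 1, the characteristic function is E[e^{uX_T}] = 1 − e^{−λT} + e^{u−λT} for u ∈ iℝ. In particular, for u = iπ and T = λ⁻¹ log 2 this expectation equals 0, so it cannot be written in exponential-affine form e^{φ+ψX₀}. -/
open MeasureTheory Set

noncomputable section

lemma key6 {Ω : Type*} [MeasurableSpace Ω] (μ : Measure Ω)
    [IsProbabilityMeasure μ] (lam T : ℝ)
    (XT : Ω → ℝ) (hmeas : Measurable XT)
    (hval : ∀ᵐ ω ∂μ, XT ω = 0 ∨ XT ω = 1)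
    (h1 : μ {ω | XT ω = 1} = ENNReal.ofReal (Real.exp (-lam * T)))
    (u : ℂ) :
    (∫ ω, Complex.exp (u * (XT ω : ℂ)) ∂μ) =
      (Complex.exp u - 1) * Real.exp (-lam * T) + 1 := by
  set A : Set Ω := {ω | XT ω = 1} with hA
  have hAm : MeasurableSet A := hmeas (measurableSet_singleton 1)
  have hae : (fun ω => Complex.exp (u * (XT ω : ℂ))) =ᵐ[μ]
      (fun ω => A.indicator (fun _ => Complex.exp u - 1) ω + 1) := by
    filter_upwards [hval] with ω hω
    rcases hω with h | h
    · have hnot : ω ∉ A := by simp [hA, h]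
      simp [h, Set.indicator_of_notMem hnot]
    · have hin : ω ∈ A := by simp [hA, h]
      simp [h, Set.indicator_of_mem hin]
  rw [integral_congr_ae hae]
  have hi1 : Integrable (fun ω => A.indicator (fun _ : Ω => Complex.exp u - 1) ω) μ :=
    (integrable_const _).indicator hAm
  rw [integral_add hi1 (integrable_const 1), integral_indicator_const _ hAm,
    integral_const]
  have : (μ A).toReal = Real.exp (-lam * T) := by
    rw [h1, ENNReal.toReal_ofReal (Real.exp_pos _).le]
  simp [measureReal_def, this, smul_eq_mul, mul_comm]

/-- for the process on `E = {0,1}` jumping from `1` to `0` with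
intensity `λ`, started at `1`, the value at time `T` equals `1` with probability
`e^{−λT}` and `0` otherwise.  Then `E[e^{uX_T}] = 1 − e^{−λT} + e^{u−λT}` for all
purely imaginary `u`; and for `u = iπ`, `T = λ⁻¹ log 2` this expectation is `0`, so
it cannot be written in exponential-affine form `e^{φ+ψ·X₀} = e^{φ+ψ}`. -/
theorem stmt6 {Ω : Type*} [MeasurableSpace Ω] (μ : Measure Ω)
    [IsProbabilityMeasure μ] (lam T : ℝ) (hlam : 0 < lam) (hT : 0 < T)
    (XT : Ω → ℝ) (hmeas : Measurable XT)
    (hval : ∀ᵐ ω ∂μ, XT ω = 0 ∨ XT ω = 1)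
    (h1 : μ {ω | XT ω = 1} = ENNReal.ofReal (Real.exp (-lam * T))) :
    (∀ u : ℂ, u.re = 0 →
      (∫ ω, Complex.exp (u * (XT ω : ℂ)) ∂μ) =
        1 - Real.exp (-lam * T) + Complex.exp (u - lam * T)) ∧
    (T = lam⁻¹ * Real.log 2 →
      (∫ ω, Complex.exp ((Real.pi : ℂ) * Complex.I * (XT ω : ℂ)) ∂μ) = 0 ∧
      ∀ φ ψ : ℂ,
        (∫ ω, Complex.exp ((Real.pi : ℂ) * Complex.I * (XT ω : ℂ)) ∂μ) ≠
          Complex.exp (φ + ψ * 1)) := by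
  have hexp : ∀ u : ℂ, Complex.exp (u - (lam : ℂ) * T) =
      Complex.exp u * (Real.exp (-lam * T) : ℝ) := by
    intro u
    rw [sub_eq_add_neg, Complex.exp_add]
    congr 1
    rw [show -((lam : ℂ) * T) = ((-lam * T : ℝ) : ℂ) by push_cast; ring,
      Complex.ofReal_exp]
  constructor
  · intro u _
    rw [key6 μ lam T XT hmeas hval h1 u, hexp]
    ring
  · intro hTval
    have hlt : Real.exp (-lam * T) = 1 / 2 := by
      rw [hTval, neg_mul, ← mul_assoc, mul_inv_cancel₀ hlam.ne', one_mul,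
        Real.exp_neg, Real.exp_log (by norm_num)]
      norm_num
    have hzero : (∫ ω, Complex.exp ((Real.pi : ℂ) * Complex.I * (XT ω : ℂ)) ∂μ) = 0 := by
      rw [key6 μ lam T XT hmeas hval h1 _, Complex.exp_pi_mul_I, hlt]
      push_cast; ring
    exact ⟨hzero, fun φ ψ h => Complex.exp_ne_zero _ (hzero ▸ h).symm⟩

end
end

section
/- With notation as above (H a polynomial map built from a basis {1,h₁,…,h_N} of Pol_n(E), and L : ℝ^N → ℝ^d with components the linear polynomials ℓ_i satisfying L∘H = id on E): any polynomial p of degree at most mn on E can be written p(x) = f(H(x)) on E for some polynomial f of degree at most m on H(E). -/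
open MvPolynomial Set

noncomputable section

lemma sub_finsupp {d : ℕ} (α : Fin d →₀ ℕ) :
    ∀ k ≤ α.sum (fun _ e => e), ∃ β ≤ α, β.sum (fun _ e => e) = k := by
  intro k
  induction k with
  | zero => intro _; exact ⟨0, zero_le, by simp⟩
  | succ k ih =>
    intro hk
    obtain ⟨β, hβle, hβsum⟩ := ih (le_of_lt (Nat.lt_of_succ_le hk))
    have hne : β ≠ α := by
      intro hEq; rw [hEq] at hβsum; omega
    have : ∃ i, β i < α i := by
      by_contra hc
      push_neg at hc
      exact hne (le_antisymm hβle (fun i => hc i))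
    obtain ⟨i, hi⟩ := this
    refine ⟨β + Finsupp.single i 1, ?_, ?_⟩
    · intro j
      simp only [Finsupp.add_apply, Finsupp.single_apply]
      by_cases hj : i = j
      · subst hj; simpa using hi
      · simp [hj]; exact hβle j
    · rw [Finsupp.sum_add_index' (fun _ => rfl) (fun _ _ _ => rfl)]
      simp [hβsum]

lemma key_monomial {d N n : ℕ} (E : Set (Fin d → ℝ))
    (h : Fin N → MvPolynomial (Fin d) ℝ)
    (hspan : ∀ q : MvPolynomial (Fin d) ℝ, q.totalDegree ≤ n →
      ∃ c : ℝ, ∃ w : Fin N → ℝ, ∀ x ∈ E,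
        MvPolynomial.eval x q = c + ∑ i, w i * MvPolynomial.eval x (h i)) :
    ∀ m : ℕ, ∀ α : Fin d →₀ ℕ, α.sum (fun _ e => e) ≤ m * n →
      ∃ f : MvPolynomial (Fin N) ℝ, f.totalDegree ≤ m ∧
        ∀ x ∈ E, MvPolynomial.eval (fun j => MvPolynomial.eval x (h j)) f =
          MvPolynomial.eval x (monomial α (1:ℝ)) := by
  intro m
  induction m with
  | zero =>
    intro α hα
    simp only [Nat.zero_mul, Nat.le_zero] at hα
    have hα0 : α = 0 := by
      rw [Finsupp.sum] at hα
      ext i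
      by_cases hi : i ∈ α.support
      · exact Finset.sum_eq_zero_iff.mp hα i hi
      · simpa using Finsupp.notMem_support_iff.mp hi
    subst hα0
    exact ⟨1, by simp, fun x hx => by simp⟩
  | succ m ih =>
    intro α hα
    obtain ⟨β, hβle, hβsum⟩ := sub_finsupp α (min n (α.sum fun _ e => e)) (min_le_right _ _)
    have hadd : β + (α - β) = α := by
      ext i; have := hβle i
      simp only [Finsupp.add_apply, Finsupp.tsub_apply]; omega
    have hsumsub : (α - β).sum (fun _ e => e) + (β.sum fun _ e => e)
        = α.sum (fun _ e => e) := by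
      rw [← Finsupp.sum_add_index' (fun _ => rfl) (fun _ _ _ => rfl)]
      rw [add_comm (α - β) β, hadd]
    have hmn : (m + 1) * n = m * n + n := by ring
    obtain ⟨f₂, hf₂, hfe₂⟩ := ih (α - β) (by omega)
    obtain ⟨c, w, hcw⟩ := hspan (monomial β 1)
      (by rw [totalDegree_monomial _ one_ne_zero]; omega)
    refine ⟨(C c + ∑ i, C (w i) * X i) * f₂, ?_, ?_⟩
    · refine le_trans (totalDegree_mul _ _) ?_
      have h1 : (C c + ∑ i, C (w i) * X i : MvPolynomial (Fin N) ℝ).totalDegree ≤ 1 := by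
        refine le_trans (totalDegree_add _ _) ?_
        simp only [totalDegree_C, max_le_iff]
        refine ⟨Nat.zero_le _, le_trans (totalDegree_finset_sum _ _) ?_⟩
        refine Finset.sup_le fun i _ => le_trans (totalDegree_mul _ _) ?_
        simp [totalDegree_X]
      omega
    · intro x hx
      rw [show (monomial α (1:ℝ)) = monomial β 1 * monomial (α - β) 1 from by
        rw [monomial_mul, one_mul, hadd]]
      simp only [eval_mul, eval_add, eval_C, map_sum, eval_X]
      rw [hfe₂ x hx, hcw x hx]

/-- with `H` built from a basis `{1,h₁,…,h_N}` of `Pol_n(E)`, every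
polynomial `p` of degree ≤ `m·n` on `E` can be written `p(x) = f(H(x))` on `E` for
some polynomial `f` of degree ≤ `m`. -/
theorem stmt10 {d N n : ℕ} (E : Set (Fin d → ℝ))
    (h : Fin N → MvPolynomial (Fin d) ℝ)
    (hdeg : ∀ i, (h i).totalDegree ≤ n)
    (hspan : ∀ q : MvPolynomial (Fin d) ℝ, q.totalDegree ≤ n →
      ∃ c : ℝ, ∃ w : Fin N → ℝ, ∀ x ∈ E,
        MvPolynomial.eval x q = c + ∑ i, w i * MvPolynomial.eval x (h i))
    (m : ℕ) (p : MvPolynomial (Fin d) ℝ) (hp : p.totalDegree ≤ m * n) :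
    ∃ f : MvPolynomial (Fin N) ℝ, f.totalDegree ≤ m ∧
      ∀ x ∈ E,
        MvPolynomial.eval (fun j : Fin N => MvPolynomial.eval x (h j)) f =
          MvPolynomial.eval x p := by
  choose F hF1 hF2 using fun α (hα : α ∈ p.support) =>
    key_monomial E h hspan m α (le_trans (le_totalDegree hα) hp)
  refine ⟨∑ α ∈ p.support.attach, C (p.coeff α.1) * F α.1 α.2, ?_, ?_⟩
  · refine le_trans (totalDegree_finset_sum _ _) ?_
    refine Finset.sup_le fun α _ => le_trans (totalDegree_mul _ _) ?_
    simpa using hF1 α.1 α.2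
  · intro x hx
    conv_rhs => rw [p.as_sum]
    simp only [map_sum, eval_mul, eval_C]
    rw [← Finset.sum_attach p.support fun α => MvPolynomial.eval x (monomial α (p.coeff α))]
    refine Finset.sum_congr rfl fun α _ => ?_
    rw [hF2 α.1 α.2 x hx]
    simp [eval_monomial, mul_comm]

end
end

section
/- The pullback map H* (defined by H*f(x) = f(H(x))) is a linear isomorphism from Pol_m(H(E)) onto Pol_{mn}(E), with inverse the pullback L* (L*p(x̄) = p(L(x̄))), for every m ∈ ℕ. -/
open MvPolynomial Set

noncomputable section


/-- Split a monomial exponent `α` into `β + γ` with `|γ| = min n |α|`. -/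
lemma split_finsupp {ι : Type*} [DecidableEq ι] (n : ℕ) (α : ι →₀ ℕ) :
    ∃ β γ : ι →₀ ℕ, β + γ = α ∧
      (γ.sum fun _ e => e) = min n (α.sum fun _ e => e) ∧
      (β.sum fun _ e => e) = (α.sum fun _ e => e) - min n (α.sum fun _ e => e) := by
  classical
  set M := Finsupp.toMultiset α with hM
  set T : Multiset ι := ((M.toList.take n : List ι) : Multiset ι) with hT
  have hTle : T ≤ M := by
    have h1 : T ≤ (M.toList : Multiset ι) :=
      Multiset.coe_le.mpr (M.toList.take_sublist n).subperm
    rwa [Multiset.coe_toList] at h1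
  have hcardM : Multiset.card M = α.sum fun _ e => e := Finsupp.card_toMultiset α
  have hcardT : Multiset.card T = min n (α.sum fun _ e => e) := by
    rw [hT, Multiset.coe_card, List.length_take, Multiset.length_toList, hcardM]
  refine ⟨(M - T).toFinsupp, T.toFinsupp, ?_, ?_, ?_⟩
  · rw [← Multiset.toFinsupp_add, tsub_add_cancel_of_le hTle, hM,
      Finsupp.toMultiset_toFinsupp]
  · rw [show ((T.toFinsupp).sum fun _ e => e) = (T.toFinsupp).sum (fun _ => id) from rfl,
      Multiset.toFinsupp_sum_eq, hcardT]
  · rw [show (((M - T).toFinsupp).sum fun _ e => e) = ((M - T).toFinsupp).sum (fun _ => id)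
        from rfl, Multiset.toFinsupp_sum_eq, Multiset.card_sub hTle, hcardM, hcardT]

/-- Degree bound for substitution. -/
lemma totalDegree_aeval_le' {d N n : ℕ} (h : Fin N → MvPolynomial (Fin d) ℝ)
    (hdeg : ∀ i, (h i).totalDegree ≤ n) (f : MvPolynomial (Fin N) ℝ) :
    (MvPolynomial.aeval h f).totalDegree ≤ f.totalDegree * n := by
  conv_lhs => rw [f.as_sum]
  rw [map_sum]
  refine totalDegree_finsetSum_le fun s hs => ?_
  rw [aeval_monomial]
  refine (totalDegree_mul _ _).trans ?_
  have h1 : ((algebraMap ℝ (MvPolynomial (Fin d) ℝ)) (coeff s f)).totalDegree = 0 := by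
    rw [MvPolynomial.algebraMap_eq]; exact totalDegree_C _
  rw [h1, zero_add]
  have h2 : (s.prod fun i k => h i ^ k).totalDegree ≤ ∑ i ∈ s.support, s i * n := by
    rw [Finsupp.prod]
    refine (totalDegree_finset_prod _ _).trans (Finset.sum_le_sum fun i _ => ?_)
    exact (totalDegree_pow _ _).trans (Nat.mul_le_mul_left _ (hdeg i))
  refine h2.trans ?_
  rw [← Finset.sum_mul]
  exact Nat.mul_le_mul_right _ (le_totalDegree hs)

/-- the pullback `H*` (`H*f = f ∘ H`) is a linear isomorphism from
`Pol_m(H(E))` onto `Pol_{mn}(E)` with inverse the pullback `L*` (`L*p = p ∘ L`):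
it is well-defined, injective (on restrictions to `H(E)`), surjective, and `L*` is a
two-sided inverse. -/
theorem stmt11 {d N n : ℕ} (E : Set (Fin d → ℝ))
    (h : Fin N → MvPolynomial (Fin d) ℝ)
    (hdeg : ∀ i, (h i).totalDegree ≤ n)
    (hspan : ∀ q : MvPolynomial (Fin d) ℝ, q.totalDegree ≤ n →
      ∃ c : ℝ, ∃ w : Fin N → ℝ, ∀ x ∈ E,
        MvPolynomial.eval x q = c + ∑ i, w i * MvPolynomial.eval x (h i))
    (ℓ : Fin d → MvPolynomial (Fin N) ℝ) (hℓdeg : ∀ i, (ℓ i).totalDegree ≤ 1)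
    -- `H : E → ℝ^N` and `L : ℝ^N → ℝ^d` with `L ∘ H = id` on `E`, `H ∘ L = id` on `H(E)`
    (H : (Fin d → ℝ) → (Fin N → ℝ))
    (hH : ∀ x, H x = fun j : Fin N => MvPolynomial.eval x (h j))
    (L : (Fin N → ℝ) → (Fin d → ℝ))
    (hL : ∀ y, L y = fun i : Fin d => MvPolynomial.eval y (ℓ i))
    (hLH : ∀ x ∈ E, L (H x) = x)
    (hHL : ∀ y ∈ H '' E, H (L y) = y)
    (m : ℕ) :
    -- `H*` maps `Pol_m(H(E))` into `Pol_{mn}(E)`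
    (∀ f : MvPolynomial (Fin N) ℝ, f.totalDegree ≤ m →
      ∃ p : MvPolynomial (Fin d) ℝ, p.totalDegree ≤ m * n ∧
        ∀ x ∈ E, MvPolynomial.eval x p = MvPolynomial.eval (H x) f) ∧
    -- `H*` is injective as a map on restrictions (polynomials agreeing on `E` after
    -- pullback agree on `H(E)`)
    (∀ f₁ f₂ : MvPolynomial (Fin N) ℝ, f₁.totalDegree ≤ m → f₂.totalDegree ≤ m →
      (∀ x ∈ E, MvPolynomial.eval (H x) f₁ = MvPolynomial.eval (H x) f₂) →
      ∀ y ∈ H '' E, MvPolynomial.eval y f₁ = MvPolynomial.eval y f₂) ∧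
    -- `H*` is surjective onto `Pol_{mn}(E)`
    (∀ p : MvPolynomial (Fin d) ℝ, p.totalDegree ≤ m * n →
      ∃ f : MvPolynomial (Fin N) ℝ, f.totalDegree ≤ m ∧
        ∀ x ∈ E, MvPolynomial.eval (H x) f = MvPolynomial.eval x p) ∧
    -- `L*` is a two-sided inverse: `L*H* = id` on `Pol_m(H(E))`, `H*L* = id` on `Pol_{mn}(E)`
    (∀ f : MvPolynomial (Fin N) ℝ, f.totalDegree ≤ m →
      ∀ y ∈ H '' E, MvPolynomial.eval (H (L y)) f = MvPolynomial.eval y f) ∧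
    (∀ p : MvPolynomial (Fin d) ℝ, p.totalDegree ≤ m * n →
      ∀ x ∈ E, MvPolynomial.eval (L (H x)) p = MvPolynomial.eval x p) := by
  classical
  -- evaluation of a substitution
  have heval : ∀ (f : MvPolynomial (Fin N) ℝ) (x : Fin d → ℝ),
      MvPolynomial.eval x (MvPolynomial.aeval h f) = MvPolynomial.eval (H x) f := by
    intro f x
    rw [aeval_def, MvPolynomial.algebraMap_eq, ← eval_assoc, hH x]
    rfl
  refine ⟨?_, ?_, ?_, ?_, ?_⟩
  · -- well defined
    intro f hf
    exact ⟨MvPolynomial.aeval h f,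
      (totalDegree_aeval_le' h hdeg f).trans (Nat.mul_le_mul_right _ hf),
      fun x _ => heval f x⟩
  · -- injective
    rintro f₁ f₂ _ _ hagree y ⟨x, hx, rfl⟩
    exact hagree x hx
  · -- surjective: by induction on m
    have key : ∀ (k : ℕ) (p : MvPolynomial (Fin d) ℝ), p.totalDegree ≤ k * n →
        ∃ f : MvPolynomial (Fin N) ℝ, f.totalDegree ≤ k ∧
          ∀ x ∈ E, MvPolynomial.eval (H x) f = MvPolynomial.eval x p := by
      intro k
      induction k with
      | zero =>
        intro p hp
        simp only [Nat.zero_mul, Nat.le_zero] at hp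
        refine ⟨MvPolynomial.C (p.coeff 0), by simp, fun x _ => ?_⟩
        have hsupp : ∀ α ∈ p.support, α = (0 : Fin d →₀ ℕ) := by
          intro α hα
          have := (MvPolynomial.totalDegree_eq_zero_iff (σ := Fin d) p).mp hp α hα
          ext i; exact this i
        rw [eval_C, MvPolynomial.eval_eq]
        rcases Finset.eq_empty_or_nonempty p.support with he | ⟨α, hα⟩
        · rw [he, Finset.sum_empty]
          have h0 : (0 : Fin d →₀ ℕ) ∉ p.support := by
            rw [he]; exact Finset.notMem_empty _
          exact MvPolynomial.notMem_support_iff.mp h0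
        · have hs : p.support = {0} :=
            Finset.eq_singleton_iff_nonempty_unique_mem.mpr ⟨⟨α, hα⟩, hsupp⟩
          rw [hs, Finset.sum_singleton]
          simp
      | succ k ih =>
        intro p hp
        -- first handle a single monomial
        have mono : ∀ (a : ℝ) (α : Fin d →₀ ℕ), (α.sum fun _ e => e) ≤ (k + 1) * n →
            ∃ f : MvPolynomial (Fin N) ℝ, f.totalDegree ≤ k + 1 ∧
              ∀ x ∈ E, MvPolynomial.eval (H x) f
                = MvPolynomial.eval x (MvPolynomial.monomial α a) := by
          intro a α hα
          obtain ⟨β, γ, hβγ, hγ, hβ⟩ := split_finsupp n α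
          have hγn : (γ.sum fun _ e => e) ≤ n := by rw [hγ]; exact min_le_left _ _
          have hβkn : (β.sum fun _ e => e) ≤ k * n := by
            rw [hβ]
            rcases le_or_gt (α.sum fun _ e => e) n with hle | hlt
            · simp [min_eq_right hle]
            · rw [min_eq_left hlt.le]
              rw [Nat.succ_mul] at hα
              omega
          obtain ⟨f₁, hf₁deg, hf₁⟩ := ih (MvPolynomial.monomial β a)
            ((totalDegree_monomial_le β a).trans hβkn)
          obtain ⟨c, w, hcw⟩ := hspan (MvPolynomial.monomial γ 1)
            ((totalDegree_monomial_le γ 1).trans hγn)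
          set g : MvPolynomial (Fin N) ℝ :=
            MvPolynomial.C c + ∑ i, MvPolynomial.C (w i) * MvPolynomial.X i with hg
          have hgdeg : g.totalDegree ≤ 1 := by
            refine (totalDegree_add _ _).trans (max_le (by simp) ?_)
            refine totalDegree_finsetSum_le fun i _ => ?_
            refine (totalDegree_mul _ _).trans ?_
            simp [totalDegree_X]
          have hgeval : ∀ x ∈ E, MvPolynomial.eval (H x) g
              = MvPolynomial.eval x (MvPolynomial.monomial γ 1) := by
            intro x hx
            rw [hcw x hx, hg, hH x]
            simp
          refine ⟨f₁ * g, (totalDegree_mul _ _).trans (add_le_add hf₁deg hgdeg), fun x hx => ?_⟩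
          rw [map_mul, hf₁ x hx, hgeval x hx, ← map_mul, monomial_mul, hβγ, mul_one]
        have hmem : ∀ α ∈ p.support, ∃ f : MvPolynomial (Fin N) ℝ, f.totalDegree ≤ k + 1 ∧
            ∀ x ∈ E, MvPolynomial.eval (H x) f
              = MvPolynomial.eval x (MvPolynomial.monomial α (p.coeff α)) :=
          fun α hα => mono (p.coeff α) α ((le_totalDegree hα).trans hp)
        choose! F hF1 hF2 using hmem
        refine ⟨∑ α ∈ p.support, F α, totalDegree_finsetSum_le hF1, fun x hx => ?_⟩
        rw [map_sum]
        conv_rhs => rw [p.as_sum, map_sum]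
        exact Finset.sum_congr rfl fun α hα => hF2 α hα x hx
    intro p hp
    exact key m p hp
  · -- L* H* = id
    intro f _ y hy
    rw [hHL y hy]
  · -- H* L* = id
    intro p _ x hx
    rw [hLH x hx]

end
end
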